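/- arXiv:1602.02073 — 12 statements merged into one kernel-verified Lean document; each statement's English description precedes it below -/
import Mathlib

section
/- Let F be a field and let M be an upper-triangular 3×3 matrix over F, written M = [[μ₀, α₀₁, α₀₂], [0, μ₁, α₁₂], [0, 0, μ₂]]. Let D = diag(β₀, β₁, β₂) with β₀, β₁, β₂ ∈ Fˣ, and set M' := D⁻¹ · M · D. Then there exists c ∈ Fˣ (namely c = β₀⁻¹β₂) such that n(M') = c · n(M) and d(M') = c · d(M), where n(X) := X₀₁X₁₂ − X₁₁X₀₂ and d(X) := −X₀₂ for an upper-triangular matrix X. In particular, the point [n(M) : d(M)] ∈ ℙ¹(F) is unchanged when M is replaced by D⁻¹MD; i.e., the Fontaine–Laffaille invariant is independent of the choice of basis as in Lemma 2.1.7. -/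
open Matrix

/-- The Fontaine–Laffaille invariant is independent of the choice of
compatible basis: conjugating an upper-triangular matrix `M` by an invertible diagonal
matrix `D = diag(β₀, β₁, β₂)` rescales both the numerator `n(X) = X₀₁X₁₂ − X₁₁X₀₂` and the
denominator `d(X) = −X₀₂` by the same unit `c = β₀⁻¹β₂`. -/
theorem stmt_0 {F : Type*} [Field F]
    (μ₀ μ₁ μ₂ α₀₁ α₀₂ α₁₂ : F) (β₀ β₁ β₂ : Fˣ)
    (M D M' : Matrix (Fin 3) (Fin 3) F)
    (hM : M = !![μ₀, α₀₁, α₀₂; 0, μ₁, α₁₂; 0, 0, μ₂])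
    (hD : D = Matrix.diagonal ![(β₀ : F), (β₁ : F), (β₂ : F)])
    (hM' : M' = D⁻¹ * M * D) :
    ∃ c : Fˣ, (c : F) = (β₀ : F)⁻¹ * (β₂ : F) ∧
      M' 0 1 * M' 1 2 - M' 1 1 * M' 0 2 = (c : F) * (M 0 1 * M 1 2 - M 1 1 * M 0 2) ∧
      -(M' 0 2) = (c : F) * (-(M 0 2)) := by
  refine ⟨β₀⁻¹ * β₂, by simp, ?_, ?_⟩ <;>
  · have hDinv : D⁻¹ = Matrix.diagonal ![(β₀ : F)⁻¹, (β₁ : F)⁻¹, (β₂ : F)⁻¹] := by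
      apply Matrix.inv_eq_left_inv
      subst hD
      rw [Matrix.diagonal_mul_diagonal]
      convert Matrix.diagonal_one using 2
      funext i
      fin_cases i <;> simp
    subst hM hD
    rw [hM', hDinv]
    simp [Matrix.mul_apply, Fin.sum_univ_three]
    field_simp
end

section
/- Let F be a field and let M = [[μ₀, α₀₁, α₀₂], [0, μ₁, α₁₂], [0, 0, μ₂]] be an invertible upper-triangular 3×3 matrix over F (so μ₀, μ₁, μ₂ ∈ Fˣ). Let J be the antidiagonal permutation matrix [[0,0,1],[0,1,0],[1,0,0]] and set N := J · (Mᵀ)⁻¹ · J. Then N is again upper triangular, with diagonal (μ₂⁻¹, μ₁⁻¹, μ₀⁻¹), and n(N) · n(M) = d(N) · d(M), where n(X) := X₀₁X₁₂ − X₁₁X₀₂ and d(X) := −X₀₂. In other words, the Fontaine–Laffaille invariant of N is the inverse in ℙ¹(F) of that of M (this is the matrix form of the identity FL(ρ̄∨) = FL(ρ̄)⁻¹). -/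
open Matrix

/-- For an invertible upper-triangular `M`, the matrix
`N = J ⬝ (Mᵀ)⁻¹ ⬝ J` (with `J` the antidiagonal permutation matrix) is again upper
triangular with diagonal `(μ₂⁻¹, μ₁⁻¹, μ₀⁻¹)`, and its Fontaine–Laffaille invariant is the
inverse of that of `M`: `n(N)·n(M) = d(N)·d(M)`, where `n(X) = X₀₁X₁₂ − X₁₁X₀₂` and
`d(X) = −X₀₂`. -/
theorem stmt_1 {F : Type*} [Field F]
    (μ₀ μ₁ μ₂ α₀₁ α₀₂ α₁₂ : F)
    (hμ₀ : μ₀ ≠ 0) (hμ₁ : μ₁ ≠ 0) (hμ₂ : μ₂ ≠ 0)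
    (M J N : Matrix (Fin 3) (Fin 3) F)
    (hM : M = !![μ₀, α₀₁, α₀₂; 0, μ₁, α₁₂; 0, 0, μ₂])
    (hJ : J = !![0, 0, 1; 0, 1, 0; 1, 0, 0])
    (hN : N = J * (Mᵀ)⁻¹ * J) :
    N 1 0 = 0 ∧ N 2 0 = 0 ∧ N 2 1 = 0 ∧
    N 0 0 = μ₂⁻¹ ∧ N 1 1 = μ₁⁻¹ ∧ N 2 2 = μ₀⁻¹ ∧
    (N 0 1 * N 1 2 - N 1 1 * N 0 2) * (M 0 1 * M 1 2 - M 1 1 * M 0 2)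
      = (-(N 0 2)) * (-(M 0 2)) := by
  have hB : (Mᵀ)⁻¹ = !![μ₀⁻¹, 0, 0;
      -α₀₁/(μ₀*μ₁), μ₁⁻¹, 0;
      (α₀₁*α₁₂ - μ₁*α₀₂)/(μ₀*μ₁*μ₂), -α₁₂/(μ₁*μ₂), μ₂⁻¹] := by
    apply Matrix.inv_eq_right_inv
    subst hM
    ext i j
    fin_cases i <;> fin_cases j <;>
      simp [Matrix.mul_apply, Fin.sum_univ_succ, Matrix.transpose_apply] <;>
        field_simp <;> ring
  subst hN hJ
  rw [hB]
  refine ⟨?_, ?_, ?_, ?_, ?_, ?_, ?_⟩ <;>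
    · simp [hM, Matrix.mul_apply, Fin.sum_univ_succ]
      try field_simp
      try rw [div_eq_iff (by simp [hμ₀, hμ₁, hμ₂])]
      try ring
end

section
/- Let p ≥ 5 be a prime, e := p − 1, F a field, and S̄ := F[u]/(u^{ep}). Let a, b be integers with b > 2, a − b > 2, and a < p − 3. Let λ, μ, ν ∈ F with λ ≠ 0 and μ ≠ 0, and let Fil ⊆ S̄³ be the S̄-submodule generated by f₀ = (u^e, μu^{e−b}, νu^{e−a}), f₁ = (0, u^e, λu^{e−(a−b)}), and f₂ = (0, 0, u^e). If ν ≠ 0 and ν ≠ λμ, then there is an isomorphism of F[u]-modules S̄³/Fil ≅ F[u]/(u^{e−a}) ⊕ F[u]/(u^{e}) ⊕ F[u]/(u^{e+a}); i.e., the elementary divisors of S̄³/Fil are (u^{e−a}, u^{e}, u^{e+a}). -/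
open Polynomial

/-- The reduced Breuil ring `F[u]/(u^N)`. -/
noncomputable abbrev PolyQuot (F : Type*) [CommRing F] (N : ℕ) : Type _ :=
  Polynomial F ⧸ Ideal.span {(Polynomial.X : Polynomial F) ^ N}

/-- The canonical quotient map `F[u] → F[u]/(u^N)`. -/
noncomputable abbrev qmk {F : Type*} [CommRing F] {N : ℕ} : Polynomial F →+* PolyQuot F N :=
  Ideal.Quotient.mk _

section Aux

set_option synthInstance.maxHeartbeats 1000000
set_option maxHeartbeats 1000000

variable {F : Type*} [CommRing F]

lemma qmk_smul {N : ℕ} (r y : Polynomial F) :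
    r • (qmk y : PolyQuot F N) = qmk (r * y) := by
  rw [← smul_eq_mul]
  exact (Submodule.Quotient.mk_smul _ r y).symm

/-- The induced quotient map `F[u]/(u^N) → F[u]/(u^d)` for `d ≤ N`, as a
`F[u]`-linear map. -/
noncomputable def qfacL {N d : ℕ} (_h : d ≤ N) :
    PolyQuot F N →ₗ[Polynomial F] PolyQuot F d where
  toFun := Ideal.Quotient.factor
    (Ideal.span_singleton_le_span_singleton.mpr (pow_dvd_pow X _h))
  map_add' := fun x y => RingHom.map_add _ x y
  map_smul' := by
    intro r x
    obtain ⟨y, rfl⟩ := Ideal.Quotient.mk_surjective x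
    simp only [RingHom.id_apply, qmk_smul, Ideal.Quotient.factor_mk]

@[simp] lemma qfacL_mk {N d : ℕ} (h : d ≤ N) (P : Polynomial F) :
    qfacL (F := F) h (qmk P) = qmk P := by
  simp only [qfacL, LinearMap.coe_mk, AddHom.coe_mk]
  exact Ideal.Quotient.factor_mk _ _

lemma qfacL_mul {N d : ℕ} (h : d ≤ N) (x y : PolyQuot F N) :
    qfacL (F := F) h (x * y) = qfacL h x * qfacL h y := by
  obtain ⟨a, rfl⟩ := Ideal.Quotient.mk_surjective x
  obtain ⟨b, rfl⟩ := Ideal.Quotient.mk_surjective y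
  rw [← map_mul, qfacL_mk, qfacL_mk, qfacL_mk, map_mul]

lemma qmk_eq_zero_of_dvd {d : ℕ} {P : Polynomial F} (h : (X : Polynomial F) ^ d ∣ P) :
    (qmk P : PolyQuot F d) = 0 :=
  Ideal.Quotient.eq_zero_iff_mem.mpr (Ideal.mem_span_singleton.mpr h)

end Aux

set_option maxHeartbeats 2000000 in
set_option synthInstance.maxHeartbeats 1000000 in
/-- Elementary divisors of `S̄³/Fil` in the case `ν ≠ 0`, `ν ≠ λμ`:
they are `(u^{e−a}, u^{e}, u^{e+a})`. -/
theorem stmt_2 {F : Type*} [Field F] (p : ℕ) (hp : p.Prime) (hp5 : 5 ≤ p)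
    (e : ℕ) (he : e = p - 1)
    (a b : ℕ) (hb : 2 < b) (hab : 2 < a - b) (ha : a < p - 3)
    (lam mu nu : F) (hlam : lam ≠ 0) (hmu : mu ≠ 0)
    (hnu : nu ≠ 0) (hnlm : nu ≠ lam * mu)
    (Fil : Submodule (PolyQuot F (e * p)) (Fin 3 → PolyQuot F (e * p)))
    (hFil : Fil = Submodule.span (PolyQuot F (e * p))
      {![qmk (X ^ e), qmk (C mu * X ^ (e - b)), qmk (C nu * X ^ (e - a))],
       ![0, qmk (X ^ e), qmk (C lam * X ^ (e - (a - b)))],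
       ![0, 0, qmk (X ^ e)]}) :
    Nonempty (((Fin 3 → PolyQuot F (e * p)) ⧸ Fil.restrictScalars (Polynomial F))
        ≃ₗ[Polynomial F]
      (PolyQuot F (e - a) × PolyQuot F e × PolyQuot F (e + a))) := by
  classical
  have hba : b ≤ a := by omega
  obtain ⟨c, rfl⟩ : ∃ c, a = b + c := ⟨a - b, by omega⟩
  obtain ⟨al, rfl⟩ : ∃ al, e = al + b + c := ⟨e - (b + c), by omega⟩
  rw [show b + c - b = c from by omega] at hFil
  rw [show al + b + c - b = al + c from by omega] at hFil
  rw [show al + b + c - (b + c) = al from by omega] at hFil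
  rw [show al + b + c - c = al + b from by omega] at hFil
  rw [show al + b + c - (b + c) = al from by omega]
  have hd1 : al ≤ (al + b + c) * p := by
    calc al ≤ (al + b + c) * 1 := by omega
    _ ≤ (al + b + c) * p := Nat.mul_le_mul_left _ (by omega)
  have hd2 : al + b + c ≤ (al + b + c) * p := by
    calc al + b + c ≤ (al + b + c) * 1 := by omega
    _ ≤ (al + b + c) * p := Nat.mul_le_mul_left _ (by omega)
  have hd3 : al + b + c + (b + c) ≤ (al + b + c) * p := by
    calc al + b + c + (b + c) ≤ (al + b + c) * 2 := by omega
    _ ≤ (al + b + c) * p := Nat.mul_le_mul_left _ (by omega)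
  -- inverse constants
  set i : F := nu⁻¹ with hidef
  set k : F := (nu - lam * mu)⁻¹ with hkdef
  have hk0 : nu - lam * mu ≠ 0 := sub_ne_zero.mpr hnlm
  have hiC : (C nu : Polynomial F) * C i = 1 := by
    rw [← C_mul, mul_inv_cancel₀ hnu, C_1]
  have hkC : ((C nu : Polynomial F) - C lam * C mu) * C k = 1 := by
    rw [← C_mul, ← C_sub, ← C_mul, mul_inv_cancel₀ hk0, C_1]
  have mkmul : ∀ P Q : Polynomial F,
      (qmk P : PolyQuot F ((al + b + c) * p)) * qmk Q = qmk (P * Q) :=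
    fun P Q => (map_mul qmk P Q).symm
  have mkadd : ∀ P Q : Polynomial F,
      (qmk P : PolyQuot F ((al + b + c) * p)) + qmk Q = qmk (P + Q) :=
    fun P Q => (map_add qmk P Q).symm
  -- the linear map Ψ
  set Ψ : (Fin 3 → PolyQuot F ((al + b + c) * p)) →ₗ[Polynomial F]
      PolyQuot F al × PolyQuot F (al + b + c) × PolyQuot F (al + b + c + (b + c)) :=
    { toFun := fun x =>
        (qfacL hd1 (x 2),
         qfacL hd2 (x 1 + x 2 * qmk (-(C mu * C i) * X ^ c)),
         qfacL hd3 (x 0 + x 1 * qmk (C lam * C k * X ^ b) + x 2 * qmk (-(C k) * X ^ (b + c)))),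
      map_add' := by
        intro x y
        have e1 : (x + y) 2 = x 2 + y 2 := rfl
        have e2 : (x + y) 1 + (x + y) 2 * qmk (-(C mu * C i) * X ^ c)
            = (x 1 + x 2 * qmk (-(C mu * C i) * X ^ c))
              + (y 1 + y 2 * qmk (-(C mu * C i) * X ^ c)) := by
          simp only [Pi.add_apply]; ring
        have e3 : (x + y) 0 + (x + y) 1 * qmk (C lam * C k * X ^ b)
              + (x + y) 2 * qmk (-(C k) * X ^ (b + c))
            = (x 0 + x 1 * qmk (C lam * C k * X ^ b) + x 2 * qmk (-(C k) * X ^ (b + c)))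
              + (y 0 + y 1 * qmk (C lam * C k * X ^ b)
                + y 2 * qmk (-(C k) * X ^ (b + c))) := by
          simp only [Pi.add_apply]; ring
        rw [e3, e2, e1]; simp only [map_add, Prod.mk_add_mk]
      map_smul' := by
        intro r x
        simp only [Pi.smul_apply, RingHom.id_apply, Prod.smul_mk, smul_mul_assoc,
          ← smul_add, map_smul] } with hΨdef
  have hΨapp : ∀ x : Fin 3 → PolyQuot F ((al + b + c) * p), Ψ x =
      (qfacL hd1 (x 2),
       qfacL hd2 (x 1 + x 2 * qmk (-(C mu * C i) * X ^ c)),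
       qfacL hd3 (x 0 + x 1 * qmk (C lam * C k * X ^ b) + x 2 * qmk (-(C k) * X ^ (b + c)))) :=
    fun x => rfl
  -- surjectivity
  have hsurj : Function.Surjective Ψ := by
    rintro ⟨t1, t2, t3⟩
    obtain ⟨g1, rfl⟩ := Ideal.Quotient.mk_surjective t1
    obtain ⟨g2, rfl⟩ := Ideal.Quotient.mk_surjective t2
    obtain ⟨g3, rfl⟩ := Ideal.Quotient.mk_surjective t3
    refine ⟨![qmk (g1 * (C i * X ^ (b + c)) + g2 * (-(C lam * C k) * X ^ b) + g3),
              qmk (g1 * (C mu * C i * X ^ c) + g2),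
              qmk g1], ?_⟩
    rw [hΨapp]
    simp only [Matrix.cons_val_zero, Matrix.cons_val_one, Matrix.head_cons,
      Matrix.cons_val_two, Matrix.tail_cons, mkmul, mkadd, qfacL_mk]
    refine Prod.ext ?_ (Prod.ext ?_ ?_)
    · rfl
    · exact congrArg (Ideal.Quotient.mk _) (by ring)
    · exact congrArg (Ideal.Quotient.mk _) (by
        linear_combination (g1 * X ^ (b + c) * C k) * hiC -
          (g1 * X ^ (b + c) * C i) * hkC)
  -- kernel
  have hker : LinearMap.ker Ψ = Fil.restrictScalars (Polynomial F) := by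
    apply le_antisymm
    · intro x hx
      rw [LinearMap.mem_ker, hΨapp] at hx
      obtain ⟨y0, hy0⟩ := Ideal.Quotient.mk_surjective (x 0)
      obtain ⟨y1, hy1⟩ := Ideal.Quotient.mk_surjective (x 1)
      obtain ⟨y2, hy2⟩ := Ideal.Quotient.mk_surjective (x 2)
      rw [← hy0, ← hy1, ← hy2] at hx
      simp only [mkmul, mkadd, qfacL_mk, Prod.mk_eq_zero] at hx
      obtain ⟨hx1, hx2, hx3⟩ := hx
      rw [Ideal.Quotient.eq_zero_iff_mem, Ideal.mem_span_singleton] at hx1 hx2 hx3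
      obtain ⟨t1, ht1⟩ := hx1
      obtain ⟨t2, ht2⟩ := hx2
      obtain ⟨t3, ht3⟩ := hx3
      have hxv : x = ![qmk y0, qmk y1, qmk y2] := by
        funext j; fin_cases j
        · exact hy0.symm
        · exact hy1.symm
        · exact hy2.symm
      have ec0 : (qmk y0 : PolyQuot F ((al + b + c) * p)) =
          qmk (t1 * C i + t2 * (-(C lam * C k) * X ^ b) + t3 * X ^ (b + c)) *
            qmk (X ^ (al + b + c)) := by
        rw [mkmul]
        exact congrArg (Ideal.Quotient.mk _) (by
          linear_combination (C i * X ^ (b + c)) * ht1 - (C lam * C k * X ^ b) * ht2 + ht3 -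
            (y2 * X ^ (b + c) * C k) * hiC + (y2 * X ^ (b + c) * C i) * hkC)
      have ec1 : (qmk y1 : PolyQuot F ((al + b + c) * p)) =
          qmk (t1 * C i + t2 * (-(C lam * C k) * X ^ b) + t3 * X ^ (b + c)) *
            qmk (C mu * X ^ (al + c)) +
          qmk (t2 * (C nu * C k) + t3 * (-(C mu) * X ^ c)) * qmk (X ^ (al + b + c)) := by
        rw [mkmul, mkmul, mkadd]
        exact congrArg (Ideal.Quotient.mk _) (by
          linear_combination (C mu * C i * X ^ c) * ht1 +
            ((C nu - C lam * C mu) * C k) * ht2 + (C mu * C i * X ^ c * y2 - y1) * hkC)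
      have ec2 : (qmk y2 : PolyQuot F ((al + b + c) * p)) =
          qmk (t1 * C i + t2 * (-(C lam * C k) * X ^ b) + t3 * X ^ (b + c)) *
            qmk (C nu * X ^ al) +
          qmk (t2 * (C nu * C k) + t3 * (-(C mu) * X ^ c)) * qmk (C lam * X ^ (al + b)) +
          qmk (t3 * (-(C nu - C lam * C mu))) * qmk (X ^ (al + b + c)) := by
        rw [mkmul, mkmul, mkmul, mkadd, mkadd]
        exact congrArg (Ideal.Quotient.mk _) (by
          linear_combination (C nu * C i) * ht1 - y2 * hiC)
      have hxmem : x ∈ Fil := by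
        rw [hFil, hxv]
        have hrepr : (![qmk y0, qmk y1, qmk y2] :
              Fin 3 → PolyQuot F ((al + b + c) * p)) =
            (qmk (t1 * C i + t2 * (-(C lam * C k) * X ^ b) + t3 * X ^ (b + c)) :
                PolyQuot F ((al + b + c) * p)) •
              ![qmk (X ^ (al + b + c)), qmk (C mu * X ^ (al + c)), qmk (C nu * X ^ al)] +
            (qmk (t2 * (C nu * C k) + t3 * (-(C mu) * X ^ c)) :
                PolyQuot F ((al + b + c) * p)) •
              ![0, qmk (X ^ (al + b + c)), qmk (C lam * X ^ (al + b))] +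
            (qmk (t3 * (-(C nu - C lam * C mu))) : PolyQuot F ((al + b + c) * p)) •
              ![0, 0, qmk (X ^ (al + b + c))] := by
          funext j; fin_cases j
          · simpa using ec0
          · simpa using ec1
          · simpa using ec2
        rw [hrepr]
        refine Submodule.add_mem _ (Submodule.add_mem _ ?_ ?_) ?_
        · exact Submodule.smul_mem _ _ (Submodule.subset_span (Set.mem_insert _ _))
        · exact Submodule.smul_mem _ _ (Submodule.subset_span
            (Set.mem_insert_of_mem _ (Set.mem_insert _ _)))
        · exact Submodule.smul_mem _ _ (Submodule.subset_span
            (Set.mem_insert_of_mem _ (Set.mem_insert_of_mem _ rfl)))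
      exact hxmem
    · intro x hx
      have hx' : x ∈ Fil := hx
      rw [hFil] at hx'
      rw [LinearMap.mem_ker]
      clear hx
      induction hx' using Submodule.span_induction with
      | mem g hg =>
        rw [hΨapp]
        rcases hg with rfl | rfl | rfl
        · simp only [Matrix.cons_val_zero, Matrix.cons_val_one, Matrix.head_cons,
            Matrix.cons_val_two, Matrix.tail_cons, mkmul, mkadd]
          refine Prod.ext ?_ (Prod.ext ?_ ?_)
          · exact qmk_eq_zero_of_dvd ⟨C nu, by ring⟩
          · exact qmk_eq_zero_of_dvd ⟨0, by
              linear_combination (-(C mu * X ^ (al + c))) * hiC⟩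
          · exact qmk_eq_zero_of_dvd ⟨0, by
              linear_combination (-(X ^ (al + b + c))) * hkC⟩
        · simp only [Matrix.cons_val_zero, Matrix.cons_val_one, Matrix.head_cons,
            Matrix.cons_val_two, Matrix.tail_cons, zero_add, zero_mul, mkmul, mkadd]
          refine Prod.ext ?_ (Prod.ext ?_ ?_)
          · exact qmk_eq_zero_of_dvd ⟨C lam * X ^ b, by ring⟩
          · exact qmk_eq_zero_of_dvd ⟨(C nu - C lam * C mu) * C i, by
              linear_combination (-(X ^ (al + b + c))) * hiC⟩
          · exact qmk_eq_zero_of_dvd ⟨0, by ring⟩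
        · simp only [Matrix.cons_val_zero, Matrix.cons_val_one, Matrix.head_cons,
            Matrix.cons_val_two, Matrix.tail_cons, zero_add, zero_mul, add_zero, mkmul,
            mkadd]
          refine Prod.ext ?_ (Prod.ext ?_ ?_)
          · exact qmk_eq_zero_of_dvd ⟨X ^ (b + c), by ring⟩
          · exact qmk_eq_zero_of_dvd ⟨-(C mu * C i) * X ^ c, by ring⟩
          · exact qmk_eq_zero_of_dvd ⟨-(C k), by ring⟩
      | zero => exact map_zero Ψ
      | add u v hu hv hu' hv' => rw [map_add, hu', hv', add_zero]
      | smul s u hu hu' =>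
        rw [hΨapp] at hu' ⊢
        have h1 := congrArg Prod.fst hu'
        have h2 := congrArg (fun z => z.2.1) hu'
        have h3 := congrArg (fun z => z.2.2) hu'
        dsimp at h1 h2 h3
        refine Prod.ext ?_ (Prod.ext ?_ ?_)
        · show qfacL hd1 ((s • u) 2) = 0
          rw [show (s • u) 2 = s * u 2 from by simp [Pi.smul_apply, smul_eq_mul],
            qfacL_mul, h1, mul_zero]
        · show qfacL hd2 _ = 0
          rw [show (s • u) 1 + (s • u) 2 * qmk (-(C mu * C i) * X ^ c) =
              s * (u 1 + u 2 * qmk (-(C mu * C i) * X ^ c)) from by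
            simp only [Pi.smul_apply, smul_eq_mul]; ring, qfacL_mul, h2, mul_zero]
        · show qfacL hd3 _ = 0
          rw [show (s • u) 0 + (s • u) 1 * qmk (C lam * C k * X ^ b) +
              (s • u) 2 * qmk (-(C k) * X ^ (b + c)) =
              s * (u 0 + u 1 * qmk (C lam * C k * X ^ b) +
                u 2 * qmk (-(C k) * X ^ (b + c))) from by
            simp only [Pi.smul_apply, smul_eq_mul]; ring, qfacL_mul, h3, mul_zero]
  exact ⟨(Submodule.quotEquivOfEq _ _ hker.symm).trans (Ψ.quotKerEquivOfSurjective hsurj)⟩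
end

section
/- Let p ≥ 5 be a prime, e := p − 1, F a field, and S̄ := F[u]/(u^{ep}). Let a, b be integers with b > 2, a − b > 2, and a < p − 3. Let λ, μ, ν ∈ F with λ ≠ 0 and μ ≠ 0, and let Fil ⊆ S̄³ be the S̄-submodule generated by f₀ = (u^e, μu^{e−b}, νu^{e−a}), f₁ = (0, u^e, λu^{e−(a−b)}), and f₂ = (0, 0, u^e). If ν = λμ, then there is an isomorphism of F[u]-modules S̄³/Fil ≅ F[u]/(u^{e−a}) ⊕ F[u]/(u^{e+(a−b)}) ⊕ F[u]/(u^{e+b}); i.e., the elementary divisors of S̄³/Fil are (u^{e−a}, u^{e+(a−b)}, u^{e+b}). -/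
open Polynomial

noncomputable def mkL (F : Type*) [Field F] (N : ℕ) :
    Polynomial F →ₗ[Polynomial F] PolyQuot F N :=
  (Ideal.Quotient.mkₐ (Polynomial F) (Ideal.span {(X : Polynomial F) ^ N})).toLinearMap

lemma mkL_apply (F : Type*) [Field F] (N : ℕ) (f : Polynomial F) :
    mkL F N f = qmk f := rfl

noncomputable def psi3 (F : Type*) [Field F] (N0 N1 N2 : ℕ) (c1 c2 : Polynomial F) :
    (Fin 3 → Polynomial F) →ₗ[Polynomial F] (PolyQuot F N0 × PolyQuot F N1 × PolyQuot F N2) :=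
  ((mkL F N0).comp (LinearMap.proj 2)).prod
    (((mkL F N1).comp (LinearMap.proj 1 - c1 • LinearMap.proj 2)).prod
      ((mkL F N2).comp (LinearMap.proj 0 - c2 • LinearMap.proj 2)))

lemma psi3_apply (F : Type*) [Field F] (N0 N1 N2 : ℕ) (c1 c2 : Polynomial F)
    (x : Fin 3 → Polynomial F) :
    psi3 F N0 N1 N2 c1 c2 x = (qmk (x 2), qmk (x 1 - c1 * x 2), qmk (x 0 - c2 * x 2)) := rfl

noncomputable def pi3 (F : Type*) [Field F] (N : ℕ) :
    (Fin 3 → Polynomial F) →ₗ[Polynomial F] (Fin 3 → PolyQuot F N) :=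
  LinearMap.pi fun i => (mkL F N).comp (LinearMap.proj i)

lemma pi3_apply (F : Type*) [Field F] (N : ℕ) (x : Fin 3 → Polynomial F) (i : Fin 3) :
    pi3 F N x i = qmk (x i) := rfl

lemma qmk_eq_zero_iff {F : Type*} [Field F] {N : ℕ} (f : Polynomial F) :
    (qmk f : PolyQuot F N) = 0 ↔ (X : Polynomial F) ^ N ∣ f := by
  rw [Ideal.Quotient.eq_zero_iff_mem, Ideal.mem_span_singleton]

set_option maxHeartbeats 1000000 in
set_option synthInstance.maxHeartbeats 400000 in
/-- Elementary divisors of `S̄³/Fil` in the case `ν = λμ`: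
they are `(u^{e−a}, u^{e+(a−b)}, u^{e+b})`. -/
theorem stmt_3 {F : Type*} [Field F] (p : ℕ) (hp : p.Prime) (hp5 : 5 ≤ p)
    (e : ℕ) (he : e = p - 1)
    (a b : ℕ) (hb : 2 < b) (hab : 2 < a - b) (ha : a < p - 3)
    (lam mu nu : F) (hlam : lam ≠ 0) (hmu : mu ≠ 0)
    (hnu : nu = lam * mu)
    (Fil : Submodule (PolyQuot F (e * p)) (Fin 3 → PolyQuot F (e * p)))
    (hFil : Fil = Submodule.span (PolyQuot F (e * p))
      {![qmk (X ^ e), qmk (C mu * X ^ (e - b)), qmk (C nu * X ^ (e - a))],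
       ![0, qmk (X ^ e), qmk (C lam * X ^ (e - (a - b)))],
       ![0, 0, qmk (X ^ e)]}) :
    Nonempty (((Fin 3 → PolyQuot F (e * p)) ⧸ Fil.restrictScalars (Polynomial F))
        ≃ₗ[Polynomial F]
      (PolyQuot F (e - a) × PolyQuot F (e + (a - b)) × PolyQuot F (e + b))) := by
  subst hnu
  have hae : a ≤ e := by omega
  obtain ⟨d, rfl⟩ : ∃ d, a = b + d := ⟨a - b, by omega⟩
  obtain ⟨m, rfl⟩ : ∃ m, e = m + (b + d) := ⟨e - (b + d), by omega⟩
  have E1 : b + d - b = d := by omega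
  have E2 : m + (b + d) - (b + d) = m := by omega
  have E3 : m + (b + d) - b = m + d := by omega
  have E4 : m + (b + d) - d = m + b := by omega
  simp only [E1, E2, E3, E4] at hFil
  rw [E1, E2]
  have hNN : (m + (b + d)) + (m + (b + d)) ≤ (m + (b + d)) * p := by
    have : (m + (b + d)) * 2 ≤ (m + (b + d)) * p :=
      Nat.mul_le_mul_left _ (by omega)
    omega
  set F0 : Fin 3 → Polynomial F :=
    ![X ^ (m + (b + d)), C mu * X ^ (m + d), C lam * C mu * X ^ m] with hF0
  set F1 : Fin 3 → Polynomial F := ![0, X ^ (m + (b + d)), C lam * X ^ (m + b)] with hF1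
  set F2 : Fin 3 → Polynomial F := ![0, 0, X ^ (m + (b + d))] with hF2
  set K : Submodule (Polynomial F) (Fin 3 → Polynomial F) :=
    Submodule.span (Polynomial F) {F0, F1, F2} with hK
  set Ψ : (Fin 3 → Polynomial F) →ₗ[Polynomial F]
      (PolyQuot F m × PolyQuot F (m + (b + d) + d) × PolyQuot F (m + (b + d) + b)) :=
    psi3 F m (m + (b + d) + d) (m + (b + d) + b)
      (C lam⁻¹ * X ^ d) (C lam⁻¹ * C mu⁻¹ * X ^ (b + d)) with hΨ
  set π : (Fin 3 → Polynomial F) →ₗ[Polynomial F] (Fin 3 → PolyQuot F ((m + (b + d)) * p)) := pi3 F ((m + (b + d)) * p) with hπ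
  have hC1 : (C lam⁻¹ * C lam : Polynomial F) = 1 := by
    rw [← C_mul, inv_mul_cancel₀ hlam, C_1]
  have hC2 : (C mu⁻¹ * C mu : Polynomial F) = 1 := by
    rw [← C_mul, inv_mul_cancel₀ hmu, C_1]
  have e00 : F0 0 = X ^ (m + (b + d)) := rfl
  have e01 : F0 1 = C mu * X ^ (m + d) := rfl
  have e02 : F0 2 = C lam * C mu * X ^ m := rfl
  have e10 : F1 0 = 0 := rfl
  have e11 : F1 1 = X ^ (m + (b + d)) := rfl
  have e12 : F1 2 = C lam * X ^ (m + b) := rfl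
  have e20 : F2 0 = 0 := rfl
  have e21 : F2 1 = 0 := rfl
  have e22 : F2 2 = X ^ (m + (b + d)) := rfl
  -- K ≤ ker Ψ
  have hK_le : K ≤ LinearMap.ker Ψ := by
    rw [hK, Submodule.span_le]
    rintro x hx
    simp only [Set.mem_insert_iff, Set.mem_singleton_iff] at hx
    refine SetLike.mem_coe.mpr (LinearMap.mem_ker.mpr ?_)
    rcases hx with rfl | rfl | rfl
    · rw [hΨ, psi3_apply, e00, e01, e02]
      refine Prod.ext ?_ (Prod.ext ?_ ?_)
      · exact (qmk_eq_zero_iff _).mpr ⟨C lam * C mu, by ring⟩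
      · refine (qmk_eq_zero_iff _).mpr ?_
        have hz : (C mu * X ^ (m + d)
            - C lam⁻¹ * X ^ d * (C lam * C mu * X ^ m) : Polynomial F) = 0 := by
          linear_combination (-(C mu * (X : Polynomial F) ^ (m + d))) * hC1
        rw [hz]; exact dvd_zero _
      · refine (qmk_eq_zero_iff _).mpr ?_
        have hz : (X ^ (m + (b + d))
            - C lam⁻¹ * C mu⁻¹ * X ^ (b + d) * (C lam * C mu * X ^ m) : Polynomial F) = 0 := by
          linear_combination (-((X : Polynomial F) ^ (m + (b + d)))) * hC1
            + (-((X : Polynomial F) ^ (m + (b + d)) * C lam⁻¹ * C lam)) * hC2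
        rw [hz]; exact dvd_zero _
    · rw [hΨ, psi3_apply, e10, e11, e12]
      refine Prod.ext ?_ (Prod.ext ?_ ?_)
      · exact (qmk_eq_zero_iff _).mpr ⟨C lam * X ^ b, by ring⟩
      · refine (qmk_eq_zero_iff _).mpr ?_
        have hz : (X ^ (m + (b + d))
            - C lam⁻¹ * X ^ d * (C lam * X ^ (m + b)) : Polynomial F) = 0 := by
          linear_combination (-((X : Polynomial F) ^ (m + (b + d)))) * hC1
        rw [hz]; exact dvd_zero _
      · exact (qmk_eq_zero_iff _).mpr ⟨-(C lam⁻¹ * C mu⁻¹ * C lam), by ring⟩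
    · rw [hΨ, psi3_apply, e20, e21, e22]
      refine Prod.ext ?_ (Prod.ext ?_ ?_)
      · exact (qmk_eq_zero_iff _).mpr ⟨X ^ (b + d), by ring⟩
      · exact (qmk_eq_zero_iff _).mpr ⟨-(C lam⁻¹), by ring⟩
      · exact (qmk_eq_zero_iff _).mpr ⟨-(C lam⁻¹ * C mu⁻¹ * X ^ d), by ring⟩
  -- ker π ≤ ker Ψ
  have hπ_le : LinearMap.ker π ≤ LinearMap.ker Ψ := by
    intro x hx
    rw [LinearMap.mem_ker] at hx
    have hxi : ∀ i, (X : Polynomial F) ^ ((m + (b + d)) * p) ∣ x i := by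
      intro i
      have hz : (qmk (x i) : PolyQuot F ((m + (b + d)) * p)) = 0 := by
        rw [← pi3_apply F ((m + (b + d)) * p) x i, ← hπ, hx]; rfl
      exact (qmk_eq_zero_iff _).mp hz
    have hdvd : ∀ (M : ℕ), M ≤ (m + (b + d)) * p → ∀ i, (X : Polynomial F) ^ M ∣ x i := fun M hM i =>
      (pow_dvd_pow X hM).trans (hxi i)
    rw [LinearMap.mem_ker, hΨ, psi3_apply]
    refine Prod.ext ?_ (Prod.ext ?_ ?_)
    · exact (qmk_eq_zero_iff _).mpr (hdvd m (by omega) 2)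
    · exact (qmk_eq_zero_iff _).mpr
        (dvd_sub (hdvd _ (by omega) 1) ((hdvd _ (by omega) 2).mul_left _))
    · exact (qmk_eq_zero_iff _).mpr
        (dvd_sub (hdvd _ (by omega) 0) ((hdvd _ (by omega) 2).mul_left _))
  -- ker Ψ ≤ K
  have hker_le : LinearMap.ker Ψ ≤ K := by
    intro x hx
    rw [LinearMap.mem_ker, hΨ, psi3_apply, Prod.ext_iff, Prod.ext_iff] at hx
    obtain ⟨h2, h1, h0⟩ := hx
    obtain ⟨g, hg⟩ := (qmk_eq_zero_iff _).mp h2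
    obtain ⟨h, hh⟩ := (qmk_eq_zero_iff _).mp h1
    obtain ⟨k, hk⟩ := (qmk_eq_zero_iff _).mp h0
    have hxeq : x = (X ^ b * k + C lam⁻¹ * C mu⁻¹ * g) • F0
        + (X ^ d * h - C mu * k) • F1 + (-(C lam * h)) • F2 := by
      funext i
      fin_cases i
      · show x 0 = (X ^ b * k + C lam⁻¹ * C mu⁻¹ * g) * F0 0
          + (X ^ d * h - C mu * k) * F1 0 + (-(C lam * h)) * F2 0
        rw [e00, e10, e20]
        linear_combination hk + C lam⁻¹ * C mu⁻¹ * X ^ (b + d) * hg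
      · show x 1 = (X ^ b * k + C lam⁻¹ * C mu⁻¹ * g) * F0 1
          + (X ^ d * h - C mu * k) * F1 1 + (-(C lam * h)) * F2 1
        rw [e01, e11, e21]
        linear_combination hh + C lam⁻¹ * X ^ d * hg - (C lam⁻¹ * g * X ^ (m + d)) * hC2
      · show x 2 = (X ^ b * k + C lam⁻¹ * C mu⁻¹ * g) * F0 2
          + (X ^ d * h - C mu * k) * F1 2 + (-(C lam * h)) * F2 2
        rw [e02, e12, e22]
        linear_combination hg + (-(g * X ^ m * C mu⁻¹ * C mu)) * hC1 + (-(g * X ^ m)) * hC2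
    rw [hxeq]
    have m0 : F0 ∈ K := Submodule.subset_span (by simp)
    have m1 : F1 ∈ K := Submodule.subset_span (by simp)
    have m2 : F2 ∈ K := Submodule.subset_span (by simp)
    exact add_mem (add_mem (K.smul_mem _ m0) (K.smul_mem _ m1)) (K.smul_mem _ m2)
  -- images of the generators under π
  have himg0 : π F0 = ![qmk (X ^ (m + (b + d))), qmk (C mu * X ^ (m + d)),
      qmk (C (lam * mu) * X ^ m)] := by
    funext i
    fin_cases i
    · rfl
    · rfl
    · show qmk (F0 2) = qmk (C (lam * mu) * X ^ m)
      rw [e02, C_mul]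
  have himg1 : π F1 = ![0, qmk (X ^ (m + (b + d))), qmk (C lam * X ^ (m + b))] := by
    funext i
    fin_cases i
    · show qmk (F1 0) = 0
      rw [e10, map_zero]
    · rfl
    · rfl
  have himg2 : π F2 = ![0, 0, qmk (X ^ (m + (b + d)))] := by
    funext i
    fin_cases i
    · show qmk (F2 0) = 0
      rw [e20, map_zero]
    · show qmk (F2 1) = 0
      rw [e21, map_zero]
    · rfl
  have hsur : Function.Surjective (algebraMap (Polynomial F) (PolyQuot F ((m + (b + d)) * p))) := by
    rw [Ideal.Quotient.algebraMap_eq]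
    exact Ideal.Quotient.mk_surjective
  have hFil' : Fil.restrictScalars (Polynomial F) = Submodule.map π K := by
    rw [hFil, Submodule.restrictScalars_span (Polynomial F) (PolyQuot F ((m + (b + d)) * p)) hsur,
      hK, Submodule.map_span]
    congr 1
    rw [Set.image_insert_eq, Set.image_insert_eq, Set.image_singleton, himg0, himg1, himg2]
  set G : (Fin 3 → Polynomial F) →ₗ[Polynomial F]
      ((Fin 3 → PolyQuot F ((m + (b + d)) * p)) ⧸ Fil.restrictScalars (Polynomial F)) :=
    (Fil.restrictScalars (Polynomial F)).mkQ.comp π with hG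
  have hπsur : Function.Surjective π := by
    intro y
    choose f hf using fun i => Ideal.Quotient.mk_surjective (y i)
    exact ⟨f, funext fun i => by rw [hπ, pi3_apply]; exact hf i⟩
  have hGsur : Function.Surjective G := by
    rw [hG, LinearMap.coe_comp]
    exact (Submodule.mkQ_surjective _).comp hπsur
  have hkerG : LinearMap.ker G = LinearMap.ker Ψ := by
    rw [hG, LinearMap.ker_comp, Submodule.ker_mkQ, hFil', Submodule.comap_map_eq]
    exact le_antisymm (sup_le hK_le hπ_le) (hker_le.trans le_sup_left)
  have hΨsur : Function.Surjective Ψ := by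
    rintro ⟨y0, y1, y2⟩
    obtain ⟨g0, rfl⟩ := Ideal.Quotient.mk_surjective y0
    obtain ⟨g1, rfl⟩ := Ideal.Quotient.mk_surjective y1
    obtain ⟨g2, rfl⟩ := Ideal.Quotient.mk_surjective y2
    refine ⟨![g2 + C lam⁻¹ * C mu⁻¹ * X ^ (b + d) * g0,
              g1 + C lam⁻¹ * X ^ d * g0, g0], ?_⟩
    rw [hΨ, psi3_apply]
    show (qmk g0,
      qmk (g1 + C lam⁻¹ * X ^ d * g0 - C lam⁻¹ * X ^ d * g0),
      qmk (g2 + C lam⁻¹ * C mu⁻¹ * X ^ (b + d) * g0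
        - C lam⁻¹ * C mu⁻¹ * X ^ (b + d) * g0)) = _
    refine Prod.ext rfl (Prod.ext ?_ ?_)
    · exact congrArg qmk (by ring)
    · exact congrArg qmk (by ring)
  exact ⟨((G.quotKerEquivOfSurjective hGsur).symm.trans
    (Submodule.quotEquivOfEq _ _ hkerG)).trans (Ψ.quotKerEquivOfSurjective hΨsur)⟩
end

section
/- Let p ≥ 3 be a prime, F a field, e ≥ 1 an integer, and R := F[u]/(u^{ep}). Let d be an integer with 0 < d < e and let x ∈ F. If the element (0, u^{2e}) of R² lies in the R-submodule of R² generated by (u^{e}, 0) and (x·u^{d}, u^{2e}), then x = 0. -/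
set_option maxHeartbeats 1000000


open Polynomial

/-- In `R = F[u]/(u^{ep})`, if `(0, u^{2e})` lies in the `R`-submodule of
`R²` generated by `(u^{e}, 0)` and `(x·u^{d}, u^{2e})` with `0 < d < e`, then `x = 0`. -/
theorem stmt_5 {F : Type*} [Field F] (p : ℕ) (hp : p.Prime) (hp3 : 3 ≤ p)
    (e : ℕ) (he : 1 ≤ e) (d : ℕ) (hd0 : 0 < d) (hde : d < e) (x : F)
    (h : (![0, qmk (X ^ (2 * e))] : Fin 2 → PolyQuot F (e * p)) ∈
      Submodule.span (PolyQuot F (e * p))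
        {![qmk (X ^ e), 0], ![qmk (C x * X ^ d), qmk (X ^ (2 * e))]}) :
    x = 0 := by
  rw [Submodule.mem_span_pair] at h
  obtain ⟨a, b, hab⟩ := h
  obtain ⟨A, rfl⟩ := Ideal.Quotient.mk_surjective a
  obtain ⟨B, rfl⟩ := Ideal.Quotient.mk_surjective b
  have h0 := congrFun hab 0
  have h1 := congrFun hab 1
  simp only [Matrix.cons_val_zero, Matrix.cons_val_one, Matrix.head_cons, Pi.add_apply,
    Pi.smul_apply, smul_eq_mul] at h0 h1
  -- turn into divisibility statements
  have hdvd0 : (X : F[X]) ^ (e * p) ∣ A * X ^ e + B * (C x * X ^ d) := by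
    rw [← Ideal.mem_span_singleton, ← Ideal.Quotient.eq_zero_iff_mem]
    push_cast [map_add, map_mul]
    simpa using h0
  have hdvd1 : (X : F[X]) ^ (e * p) ∣ (B - 1) * X ^ (2 * e) := by
    rw [← Ideal.mem_span_singleton, ← Ideal.Quotient.eq_zero_iff_mem]
    simp only [map_mul, map_sub, map_one, map_pow, sub_mul, one_mul]
    rw [sub_eq_zero]
    simpa using h1
  have h2e : 2 * e < e * p := by nlinarith
  have hdep : d < e * p := lt_of_lt_of_le hde (by nlinarith)
  -- B.coeff 0 = 1
  obtain ⟨Q', hQ'⟩ := hdvd1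
  have hB0 : B.coeff 0 = 1 := by
    have := congrArg (fun q : F[X] => q.coeff (2 * e)) hQ'
    simp only [mul_comm ((X : F[X]) ^ (e * p)) Q', Polynomial.coeff_mul_X_pow',
      le_refl, if_pos, Nat.sub_self, not_le.mpr h2e, if_neg] at this
    have hsub : (B - 1).coeff 0 = 0 := by simpa using this
    rw [Polynomial.coeff_sub, sub_eq_zero] at hsub
    simpa using hsub
  -- coefficient at d
  obtain ⟨Q, hQ⟩ := hdvd0
  have hco := congrArg (fun q : F[X] => q.coeff d) hQ
  have harr : A * X ^ e + B * (C x * X ^ d) = A * X ^ e + (C x * B) * X ^ d := by ring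
  rw [harr, mul_comm ((X : F[X]) ^ (e * p)) Q] at hco
  simp only [Polynomial.coeff_add, Polynomial.coeff_mul_X_pow',
    not_le.mpr hde, if_neg, not_le.mpr hdep, le_refl, if_pos, Nat.sub_self,
    Polynomial.coeff_C_mul, zero_add] at hco
  rw [hB0, mul_one] at hco
  simpa using hco
end

section
/- Let F be a field, and let e, N, m, n be integers with e ≥ 1, N > 2e, m ≥ 0, and e + m < n ≤ N. Set R := F[u]/(u^{N}) and let c ∈ F. If the element (u^{2e}, 0) of R² lies in the R-submodule of R² generated by (u^{e}, c·u^{m}) and (0, u^{n}), then c = 0. -/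
open Polynomial

/-- In `R = F[u]/(u^N)` with `N > 2e`, `m ≥ 0` and `e + m < n ≤ N`, if
`(u^{2e}, 0)` lies in the `R`-submodule of `R²` generated by `(u^{e}, c·u^{m})` and
`(0, u^{n})`, then `c = 0`. -/
theorem stmt_6 {F : Type*} [Field F] (e N m n : ℕ) (he : 1 ≤ e) (hN : 2 * e < N)
    (hm : 0 ≤ m) (hmn : e + m < n) (hnN : n ≤ N) (c : F)
    (h : (![qmk (X ^ (2 * e)), 0] : Fin 2 → PolyQuot F N) ∈
      Submodule.span (PolyQuot F N)
        {![qmk (X ^ e), qmk (C c * X ^ m)], ![0, qmk (X ^ n)]}) :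
    c = 0 := by
  obtain ⟨a, b, hab⟩ := Submodule.mem_span_pair.mp h
  obtain ⟨A, rfl⟩ := Ideal.Quotient.mk_surjective a
  obtain ⟨B, rfl⟩ := Ideal.Quotient.mk_surjective b
  have h0 := congrFun hab 0
  have h1 := congrFun hab 1
  simp only [Pi.add_apply, Pi.smul_apply, Matrix.cons_val_zero, Matrix.cons_val_one,
    Matrix.head_cons, smul_eq_mul, Pi.zero_apply, mul_zero, add_zero] at h0 h1
  rw [show (Ideal.Quotient.mk (Ideal.span {(X : F[X]) ^ N}) A) * qmk (X ^ e)
      = qmk (A * X ^ e) from (map_mul _ _ _).symm, Ideal.Quotient.eq,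
    Ideal.mem_span_singleton] at h0
  have h1' : (X : F[X]) ^ N ∣ A * (C c * X ^ m) + B * X ^ n := by
    rw [← Ideal.mem_span_singleton, ← Ideal.Quotient.eq_zero_iff_mem, map_add, map_mul, map_mul]
    exact h1
  obtain ⟨Q, hQ⟩ := h0
  obtain ⟨S, hS⟩ := h1'
  have hA : A = X ^ e + X ^ (N - e) * Q := by
    have he' : e ≤ N := le_of_lt (lt_of_le_of_lt (by nlinarith) hN)
    have hXe : (X : F[X]) ^ e ≠ 0 := pow_ne_zero _ X_ne_zero
    apply mul_left_cancel₀ hXe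
    have : (X : F[X]) ^ N = X ^ e * X ^ (N - e) := by
      rw [← pow_add, Nat.add_sub_cancel' he']
    rw [mul_comm (X ^ e) A]
    rw [sub_eq_iff_eq_add] at hQ
    rw [hQ, this, mul_add, two_mul, pow_add]
    ring
  have key := congrArg (fun p => p.coeff (e + m)) hS
  rw [coeff_add] at key
  have hBn : (B * X ^ n).coeff (e + m) = 0 := by
    rw [coeff_mul_X_pow']
    simp [not_le.mpr hmn]
  have hSN : ((X : F[X]) ^ N * S).coeff (e + m) = 0 := by
    rw [mul_comm, coeff_mul_X_pow']
    simp [not_le.mpr (lt_of_lt_of_le hmn hnN)]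
  have hAc : (A * (C c * X ^ m)).coeff (e + m) = c := by
    rw [show A * (C c * X ^ m) = (A * C c) * X ^ m by ring, coeff_mul_X_pow', if_pos (by omega)]
    have : e + m - m = e := by omega
    rw [this, coeff_mul_C, hA, coeff_add, coeff_X_pow, if_pos rfl]
    have : ((X : F[X]) ^ (N - e) * Q).coeff e = 0 := by
      rw [mul_comm, coeff_mul_X_pow']
      simp [not_le.mpr (by omega : e < N - e)]
    rw [this]
    ring
  rw [hAc, hBn, hSN] at key
  simpa using key
end

section
/- Let p be a prime, F a field, e ≥ 1 and 0 ≤ r ≤ p − 2 integers. Set S̄ := F[u]/(u^{ep}) and let φ : S̄ → S̄ be the F-algebra endomorphism with φ(u) = u^{p}. Let M := S̄ⁿ with standard basis (e₁, …, eₙ), let V ∈ Mₙ(S̄), let Fil ⊆ M be the S̄-span of the columns f_j := Σ_i V_{ij} e_i of V, and assume u^{er}M ⊆ Fil. Let φ_r : Fil → M be an additive map satisfying φ_r(s·x) = φ(s)·φ_r(x) for all s ∈ S̄, x ∈ Fil, and suppose A ∈ GLₙ(S̄) satisfies φ_r(f_j) = Σ_i A_{ij} e_i for all j. Suppose V′ ∈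 Mₙ(S̄) and B ∈ GLₙ(S̄) satisfy A·V′ ≡ V·B (mod u^{e(r+1)} Mₙ(S̄)). Then: (i) the columns e′_j := Σ_i A_{ij} e_i of A form an S̄-basis of M; (ii) the columns f′_j := Σ_i (A V′)_{ij} e_i of A·V′ lie in Fil and generate Fil as an S̄-module; and (iii) φ_r(f′_j) = Σ_i φ(B)_{ij} e′_i for all j, where φ(B) is obtained by applying φ to each entry of B. -/
open Polynomial

set_option synthInstance.maxHeartbeats 400000
set_option maxHeartbeats 800000

/-- change of basis for Breuil modules, Lemma 2.2.8.
Let `S̄ = F[u]/(u^{ep})`, `φ` the `F`-algebra endomorphism of `S̄` with `φ(u) = u^p`,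
`M = S̄ⁿ`, `Fil` the span of the columns of `V` (containing `u^{er}M`), `φ_r : Fil → M`
additive and `φ`-semilinear, sending the `j`-th column of `V` to the `j`-th column of
`A ∈ GLₙ(S̄)`.  If `A·V′ ≡ V·B (mod u^{e(r+1)})` with `B ∈ GLₙ(S̄)`, then the columns of
`A` form a basis of `M`, the columns of `A·V′` lie in `Fil` and generate it, and
`φ_r` sends the `j`-th column of `A·V′` to `Σᵢ φ(B)ᵢⱼ · (i-th column of A)`. -/
theorem stmt_7 {F : Type*} [Field F] (p : ℕ) (hp : p.Prime)
    (e r n : ℕ) (he : 1 ≤ e) (hr : r ≤ p - 2)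
    (φ : PolyQuot F (e * p) →ₐ[F] PolyQuot F (e * p))
    (hφ : φ (qmk X) = qmk (X ^ p))
    (V : Matrix (Fin n) (Fin n) (PolyQuot F (e * p)))
    (Fil : Submodule (PolyQuot F (e * p)) (Fin n → PolyQuot F (e * p)))
    (hFil : Fil = Submodule.span (PolyQuot F (e * p)) (Set.range fun j i => V i j))
    (hur : ∀ x : Fin n → PolyQuot F (e * p),
      (qmk (X ^ (e * r)) : PolyQuot F (e * p)) • x ∈ Fil)
    (φr : ↥Fil →+ (Fin n → PolyQuot F (e * p)))
    (hsemi : ∀ (s : PolyQuot F (e * p)) (x : ↥Fil), φr (s • x) = φ s • φr x)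
    (A : Matrix (Fin n) (Fin n) (PolyQuot F (e * p))) (hA : IsUnit A)
    (hφrA : ∀ (j : Fin n) (hj : (fun i => V i j) ∈ Fil),
      φr ⟨fun i => V i j, hj⟩ = fun i => A i j)
    (V' B : Matrix (Fin n) (Fin n) (PolyQuot F (e * p))) (hB : IsUnit B)
    (hcong : ∃ E : Matrix (Fin n) (Fin n) (PolyQuot F (e * p)),
      A * V' = V * B + (qmk (X ^ (e * (r + 1))) : PolyQuot F (e * p)) • E) :
    (∃ bas : Module.Basis (Fin n) (PolyQuot F (e * p)) (Fin n → PolyQuot F (e * p)),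
      ∀ j, bas j = fun i => A i j) ∧
    (∀ j : Fin n, (fun i => (A * V') i j) ∈ Fil) ∧
    Submodule.span (PolyQuot F (e * p)) (Set.range fun j i => (A * V') i j) = Fil ∧
    (∀ (j : Fin n) (hj : (fun i => (A * V') i j) ∈ Fil),
      φr ⟨fun i => (A * V') i j, hj⟩ = ∑ i, φ (B i j) • (fun k => A k i)) := by
  obtain ⟨E, hE⟩ := hcong
  obtain ⟨iA⟩ := hA.nonempty_invertible
  obtain ⟨iB⟩ := hB.nonempty_invertible
  letI := iA
  letI := iB
  -- basic scalar facts
  have hzero : (qmk (X ^ (e * p)) : PolyQuot F (e * p)) = 0 := by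
    rw [Ideal.Quotient.eq_zero_iff_mem]
    exact Ideal.subset_span (Set.mem_singleton _)
  have hzero' : ∀ m : ℕ, e * p ≤ m → (qmk (X ^ m) : PolyQuot F (e * p)) = 0 := by
    intro m hm
    have h1 : (X : Polynomial F) ^ m = X ^ (e * p) * X ^ (m - e * p) := by
      rw [← pow_add]; congr 1; omega
    rw [h1, map_mul, hzero, zero_mul]
  have hφpow : ∀ m : ℕ, φ (qmk (X ^ m) : PolyQuot F (e * p)) = qmk (X ^ (p * m)) := by
    intro m
    have h1 : (qmk (X ^ m) : PolyQuot F (e * p)) = (qmk X : PolyQuot F (e * p)) ^ m := by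
      rw [← map_pow]
    rw [h1, map_pow, hφ, ← map_pow, ← pow_mul]
  have hφe : φ (qmk (X ^ e) : PolyQuot F (e * p)) = 0 := by
    rw [hφpow e]; exact hzero' _ (le_of_eq (Nat.mul_comm e p))
  -- columns of V
  have hcolV : ∀ j, (fun i => V i j) ∈ Fil := fun j =>
    hFil ▸ Submodule.subset_span ⟨j, rfl⟩
  -- column of product lemma
  have hcolmul : ∀ (M N : Matrix (Fin n) (Fin n) (PolyQuot F (e * p))) (j : Fin n),
      (fun i => (M * N) i j) = ∑ k, N k j • (fun i => M i k) := by
    intro M N j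
    funext i
    simp [Matrix.mul_apply, Finset.sum_apply, mul_comm]
  set c : PolyQuot F (e * p) := (qmk (X ^ (e * (r + 1))) : PolyQuot F (e * p)) with hc
  have hcsplit : c = (qmk (X ^ (e * r)) : PolyQuot F (e * p)) * qmk (X ^ e) := by
    rw [hc, ← map_mul, ← pow_add, show e * r + e = e * (r + 1) from by ring]
  -- decomposition of columns of A*V'
  have hdec : ∀ j : Fin n, (fun i => (A * V') i j)
      = (fun i => (V * B) i j) + c • (fun i => E i j) := by
    intro j; funext i
    rw [hE]
    simp [Matrix.add_apply, Matrix.smul_apply]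
  have hVBmem : ∀ j, (fun i => (V * B) i j) ∈ Fil := by
    intro j
    rw [hcolmul]
    exact Submodule.sum_mem _ fun k _ => Submodule.smul_mem _ _ (hcolV k)
  have htail : ∀ x : Fin n → PolyQuot F (e * p), c • x ∈ Fil := by
    intro x
    have h1 : c • x = (qmk (X ^ (e * r)) : PolyQuot F (e * p)) •
        ((qmk (X ^ e) : PolyQuot F (e * p)) • x) := by
      rw [hcsplit]; module
    rw [h1]
    exact hur _
  have hmem : ∀ j : Fin n, (fun i => (A * V') i j) ∈ Fil := by
    intro j
    rw [hdec j]
    exact Fil.add_mem (hVBmem j) (htail _)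
  refine ⟨?_, hmem, ?_, ?_⟩
  · -- basis
    refine ⟨(Pi.basisFun (PolyQuot F (e * p)) (Fin n)).map (A.toLinearEquiv' iA), fun j => ?_⟩
    funext i
    simp [Matrix.toLinearEquiv', Matrix.toLin'_apply, Matrix.mulVec_single]
  · -- span equality
    set N := Submodule.span (PolyQuot F (e * p)) (Set.range fun j i => (A * V') i j) with hN
    have hNFil : N ≤ Fil := by
      rw [hN, Submodule.span_le]
      rintro _ ⟨j, rfl⟩
      exact hmem j
    have hcolAV' : ∀ k : Fin n, (fun i => (A * V') i k) ∈ N := fun k =>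
      hN ▸ Submodule.subset_span ⟨k, rfl⟩
    -- every element of Fil is in N up to a c-multiple
    have hD : ∀ f ∈ Fil, ∃ y : Fin n → PolyQuot F (e * p), f + c • y ∈ N := by
      intro f hf
      rw [hFil] at hf
      induction hf using Submodule.span_induction with
      | mem x h =>
        obtain ⟨j, rfl⟩ := h
        show ∃ y, (fun i => V i j) + c • y ∈ N
        refine ⟨∑ k, (⅟B) k j • (fun i => E i k), ?_⟩
        have hBB' : V * B * ⅟B = V := by
          rw [Matrix.mul_assoc, mul_invOf_self, Matrix.mul_one]
        have hkey : (fun i => V i j) + c • (∑ k, (⅟B) k j • (fun i => E i k))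
            = ∑ k, (⅟B) k j • (fun i => (A * V') i k) := by
          have h6 : ∑ k, (⅟B) k j • (fun i => (A * V') i k)
              = ∑ k, ((⅟B) k j • (fun i => (V * B) i k)
                  + (⅟B) k j • (c • fun i => E i k)) := by
            refine Finset.sum_congr rfl fun k _ => ?_
            rw [hdec k]; module
          rw [h6, Finset.sum_add_distrib]
          congr 1
          · rw [← hcolmul (V * B) (⅟B) j, hBB']
          · rw [Finset.smul_sum]
            refine Finset.sum_congr rfl fun k _ => ?_
            module
        rw [hkey]
        exact Submodule.sum_mem _ fun k _ => Submodule.smul_mem _ _ (hcolAV' k)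
      | zero =>
        refine ⟨0, ?_⟩
        have h1 : (0 : Fin n → PolyQuot F (e * p)) + c • 0 = 0 := by module
        rw [h1]
        exact N.zero_mem
      | add x y hx hy ihx ihy =>
        obtain ⟨y1, h1⟩ := ihx
        obtain ⟨y2, h2⟩ := ihy
        refine ⟨y1 + y2, ?_⟩
        have h3 : x + y + c • (y1 + y2) = (x + c • y1) + (y + c • y2) := by module
        rw [h3]; exact N.add_mem h1 h2
      | smul a x hx ihx =>
        obtain ⟨y, h1⟩ := ihx
        refine ⟨a • y, ?_⟩
        have h3 : a • x + c • (a • y) = a • (x + c • y) := by module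
        rw [h3]; exact N.smul_mem a h1
    -- descending induction step
    have hstep : ∀ k : ℕ,
        (∀ x : Fin n → PolyQuot F (e * p),
          (qmk (X ^ (e * (r + 1) + e * (k + 1))) : PolyQuot F (e * p)) • x ∈ N) →
        ∀ x : Fin n → PolyQuot F (e * p),
          (qmk (X ^ (e * (r + 1) + e * k)) : PolyQuot F (e * p)) • x ∈ N := by
      intro k ih x
      obtain ⟨y, hy⟩ := hD _ (hur x)
      have hs1 : (qmk (X ^ (e * (r + 1) + e * k)) : PolyQuot F (e * p))
          = qmk (X ^ (e * (k + 1))) * qmk (X ^ (e * r)) := by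
        rw [← map_mul, ← pow_add, show e * (k + 1) + e * r = e * (r + 1) + e * k from by ring]
      have hs2 : (qmk (X ^ (e * (r + 1) + e * (k + 1))) : PolyQuot F (e * p))
          = qmk (X ^ (e * (k + 1))) * c := by
        rw [hc, ← map_mul, ← pow_add,
          show e * (k + 1) + e * (r + 1) = e * (r + 1) + e * (k + 1) from by ring]
      have key : (qmk (X ^ (e * (r + 1) + e * k)) : PolyQuot F (e * p)) • x
          = (qmk (X ^ (e * (k + 1))) : PolyQuot F (e * p)) •
              ((qmk (X ^ (e * r)) : PolyQuot F (e * p)) • x + c • y)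
            - (qmk (X ^ (e * (r + 1) + e * (k + 1))) : PolyQuot F (e * p)) • y := by
        rw [hs1, hs2]; module
      rw [key]
      exact N.sub_mem (N.smul_mem _ hy) (ih y)
    have hQ : ∀ m : ℕ, ∀ x : Fin n → PolyQuot F (e * p),
        (qmk (X ^ (e * (r + 1) + e * (p - 1 - r - m))) : PolyQuot F (e * p)) • x ∈ N := by
      intro m
      induction m with
      | zero =>
        intro x
        have h2 := hp.two_le
        have h1 : e * (r + 1) + e * (p - 1 - r - 0) = e * p := by
          rw [Nat.sub_zero, ← Nat.mul_add, show r + 1 + (p - 1 - r) = p from by omega]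
        rw [h1, hzero]
        have h3 : (0 : PolyQuot F (e * p)) • x = 0 := by module
        rw [h3]
        exact N.zero_mem
      | succ m ih =>
        by_cases h : m < p - 1 - r
        · have h1 : p - 1 - r - m = (p - 1 - r - (m + 1)) + 1 := by omega
          rw [h1] at ih
          exact hstep _ ih
        · have h1 : p - 1 - r - (m + 1) = p - 1 - r - m := by omega
          rw [h1]
          exact ih
    have hQ0 : ∀ x : Fin n → PolyQuot F (e * p), c • x ∈ N := by
      intro x
      have h1 := hQ (p - 1 - r) x
      rw [Nat.sub_self, Nat.mul_zero, Nat.add_zero] at h1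
      rw [hc]
      exact h1
    have hFilN : Fil ≤ N := by
      intro f hf
      obtain ⟨y, hy⟩ := hD f hf
      have h1 : f = (f + c • y) - c • y := by module
      rw [h1]
      exact N.sub_mem hy (hQ0 y)
    exact le_antisymm hNFil hFilN
  · -- the semilinear map computation
    intro j hj
    have hmemE : (qmk (X ^ (e * r)) : PolyQuot F (e * p)) • (fun i => E i j) ∈ Fil := hur _
    have hsplit : (⟨fun i => (A * V') i j, hj⟩ : Fil)
        = ⟨fun i => (V * B) i j, hVBmem j⟩
          + (qmk (X ^ e) : PolyQuot F (e * p)) •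
            (⟨(qmk (X ^ (e * r)) : PolyQuot F (e * p)) • (fun i => E i j), hmemE⟩ : Fil) := by
      apply Subtype.ext
      simp only [Submodule.coe_add, SetLike.val_smul]
      rw [hdec j]
      have h1 : c = (qmk (X ^ e) : PolyQuot F (e * p)) * qmk (X ^ (e * r)) := by
        rw [hcsplit]; ring
      rw [h1]
      module
    have hsum : (⟨fun i => (V * B) i j, hVBmem j⟩ : Fil)
        = ∑ k, B k j • (⟨fun i => V i k, hcolV k⟩ : Fil) := by
      apply Subtype.ext
      simp only [AddSubmonoidClass.coe_finset_sum, SetLike.val_smul]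
      exact hcolmul V B j
    rw [hsplit, map_add, hsemi, hφe]
    have hz : (0 : PolyQuot F (e * p)) •
        φr ⟨(qmk (X ^ (e * r)) : PolyQuot F (e * p)) • (fun i => E i j), hmemE⟩ = 0 := by
      module
    rw [hz, add_zero, hsum, map_sum]
    refine Finset.sum_congr rfl fun k _ => ?_
    rw [hsemi, hφrA k]
end

section
/- Let p be a prime, F a field, e ≥ 1 and 0 ≤ r ≤ p − 2 integers. Set S̄ := F[u]/(u^{ep}) and let φ : S̄ → S̄ be the F-algebra endomorphism with φ(u) = u^{p}. Let M be a finite free S̄-module, Fil ⊆ M an S̄-submodule with u^{er}M ⊆ Fil, and φ_r : Fil → M an additive map satisfying φ_r(s·x) = φ(s)·φ_r(x) for all s ∈ S̄, x ∈ Fil, such that the S̄-span of φ_r(Fil) equals M. Let N ⊆ M be an S̄-submodule that is free as an S̄-module (equivalently, a direct summand of M) and satisfies φ_r(N ∩ Fil) ⊆ N. Then the S̄-span of φ_r(N ∩ Fil) equals N. -/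
open Polynomial

set_option synthInstance.maxHeartbeats 400000
set_option maxHeartbeats 800000

section NAK

lemma nak_lemma {R M : Type*} [CommRing R] [AddCommGroup M] [Module R M]
    (u : R) (q : ℕ) (hu : u ^ q = 0) (A B : Submodule R M)
    (h : B ≤ A ⊔ Submodule.map (LinearMap.lsmul R M u) B) : B ≤ A := by
  have key : ∀ k : ℕ, B ≤ A ⊔ Submodule.map (LinearMap.lsmul R M (u ^ k)) B := by
    intro k
    induction k with
    | zero =>
      refine le_trans ?_ le_sup_right
      intro x hx
      exact ⟨x, hx, by simp⟩
    | succ k ih =>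
      refine h.trans (sup_le le_sup_left ?_)
      have h2 : Submodule.map (LinearMap.lsmul R M u) B ≤
          Submodule.map (LinearMap.lsmul R M u)
            (A ⊔ Submodule.map (LinearMap.lsmul R M (u ^ k)) B) :=
        Submodule.map_mono ih
      refine h2.trans ?_
      rw [Submodule.map_sup]
      refine sup_le ?_ ?_
      · refine le_trans ?_ le_sup_left
        rintro x ⟨a, ha, rfl⟩
        exact A.smul_mem u ha
      · refine le_trans ?_ le_sup_right
        rw [← Submodule.map_comp]
        have : (LinearMap.lsmul R M u).comp (LinearMap.lsmul R M (u ^ k)) =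
            LinearMap.lsmul R M (u ^ (k + 1)) := by
          ext x
          simp [smul_smul, pow_succ, mul_comm]
        rw [this]
  have := key q
  rw [hu] at this
  refine this.trans (sup_le le_rfl ?_)
  rintro x ⟨a, ha, rfl⟩
  simp only [LinearMap.lsmul_apply, zero_smul]
  exact A.zero_mem

end NAK
section Prelim

variable {F : Type*} [Field F] {q : ℕ}

lemma polyQuot_u_pow (k : ℕ) (hk : q ≤ k) : (qmk X : PolyQuot F q) ^ k = 0 := by
  have : (qmk X : PolyQuot F q) ^ k = qmk (X ^ k) := by rw [map_pow]
  rw [this]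
  refine Ideal.Quotient.eq_zero_iff_mem.2 ?_
  exact Ideal.mem_span_singleton.2 (pow_dvd_pow _ hk)

lemma polyQuot_algebraMap (a : F) :
    algebraMap F (PolyQuot F q) a = qmk (C a) := rfl

lemma polyQuot_decomp (s : PolyQuot F q) :
    ∃ (a : F) (t : PolyQuot F q), s = algebraMap F (PolyQuot F q) a + qmk X * t := by
  obtain ⟨g, rfl⟩ := Ideal.Quotient.mk_surjective s
  refine ⟨g.coeff 0, qmk g.divX, ?_⟩
  rw [polyQuot_algebraMap]
  have : (qmk (X * g.divX + C (g.coeff 0)) : PolyQuot F q) = qmk g := by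
    rw [X_mul_divX_add]
  rw [← this, map_add, map_mul, add_comm]

lemma polyQuot_div {q' : ℕ} (hq : q = q' + 1) (s : PolyQuot F q)
    (hs : (qmk X : PolyQuot F q) ^ q' * s = 0) :
    ∃ t, s = qmk X * t := by
  obtain ⟨g, rfl⟩ := Ideal.Quotient.mk_surjective s
  have h1 : (qmk (X ^ q' * g) : PolyQuot F q) = 0 := by
    rw [map_mul, map_pow]; exact hs
  have h2 : (X : F[X]) ^ q ∣ X ^ q' * g :=
    Ideal.mem_span_singleton.1 (Ideal.Quotient.eq_zero_iff_mem.1 h1)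
  have h3 : (X : F[X]) ∣ g := by
    rw [hq, pow_succ] at h2
    exact (mul_dvd_mul_iff_left (pow_ne_zero q' (X_ne_zero (R := F)))).1 h2
  obtain ⟨h, rfl⟩ := h3
  exact ⟨qmk h, by rw [map_mul]⟩

lemma polyQuot_finite : Module.Finite F (PolyQuot F q) := by
  classical
  refine ⟨⟨(Finset.range q).image (fun i => (qmk (X ^ i) : PolyQuot F q)), ?_⟩⟩
  rw [eq_top_iff]
  rintro s -
  obtain ⟨g, rfl⟩ := Ideal.Quotient.mk_surjective s
  have hg : (qmk g : PolyQuot F q) =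
      ∑ i ∈ Finset.range (g.natDegree + 1), g.coeff i • (qmk (X ^ i) : PolyQuot F q) := by
    conv_lhs => rw [g.as_sum_range_C_mul_X_pow]
    rw [map_sum]
    refine Finset.sum_congr rfl (fun i _ => ?_)
    rw [map_mul, ← polyQuot_algebraMap, ← Algebra.smul_def]
  rw [hg]
  refine Submodule.sum_mem _ (fun i _ => ?_)
  by_cases hi : i < q
  · exact Submodule.smul_mem _ _ (Submodule.subset_span (by
      simp only [Finset.coe_image, Set.mem_image, Finset.mem_coe, Finset.mem_range]
      exact ⟨i, hi, rfl⟩))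
  · have hz : (qmk (X ^ i) : PolyQuot F q) = 0 := by
      exact (map_pow (qmk (F:=F) (N:=q)) X i).symm.trans (polyQuot_u_pow i (le_of_not_gt hi))
    rw [hz, smul_zero]
    exact Submodule.zero_mem _

end Prelim


/-- essential content of Lemma 2.3.2. Let `S̄ = F[u]/(u^{ep})`, `φ` the
`F`-algebra endomorphism of `S̄` with `φ(u) = u^p`, and `(M, Fil, φ_r)` a Breuil-module
datum: `u^{er}M ⊆ Fil`, `φ_r : Fil → M` additive and `φ`-semilinear with
`span(φ_r(Fil)) = M`.  If `N ⊆ M` is an `S̄`-free submodule (equivalently, a direct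
summand) with `φ_r(N ∩ Fil) ⊆ N`, then the `S̄`-span of `φ_r(N ∩ Fil)` equals `N`. -/
theorem stmt_8 {F : Type*} [Field F] (p : ℕ) (hp : p.Prime)
    (e r : ℕ) (he : 1 ≤ e) (hr : r ≤ p - 2)
    (φ : PolyQuot F (e * p) →ₐ[F] PolyQuot F (e * p))
    (hφ : φ (qmk X) = qmk (X ^ p))
    {M : Type*} [AddCommGroup M] [Module (PolyQuot F (e * p)) M]
    [Module.Free (PolyQuot F (e * p)) M] [Module.Finite (PolyQuot F (e * p)) M]
    (Fil : Submodule (PolyQuot F (e * p)) M)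
    (hur : ∀ x : M, (qmk (X ^ (e * r)) : PolyQuot F (e * p)) • x ∈ Fil)
    (φr : ↥Fil →+ M)
    (hsemi : ∀ (s : PolyQuot F (e * p)) (x : ↥Fil), φr (s • x) = φ s • φr x)
    (hgen : Submodule.span (PolyQuot F (e * p)) (Set.range ⇑φr) = ⊤)
    (N : Submodule (PolyQuot F (e * p)) M)
    (hNfree : Module.Free (PolyQuot F (e * p)) ↥N)
    (hNstab : ∀ x : ↥Fil, (x : M) ∈ N → φr x ∈ N) :
    Submodule.span (PolyQuot F (e * p)) (⇑φr '' {x : ↥Fil | (x : M) ∈ N}) = N := by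

  classical
  have hq1 : 1 ≤ e * p := Nat.mul_pos he hp.pos
  set u : PolyQuot F (e * p) := qmk X with hu_def
  have hupow : u ^ (e * p) = 0 := polyQuot_u_pow _ le_rfl
  letI : Module F M := Module.compHom M (algebraMap F (PolyQuot F (e * p)))
  haveI hTower : IsScalarTower F (PolyQuot F (e * p)) M := ⟨fun a s m => by
    show (a • s) • m = (algebraMap F (PolyQuot F (e * p)) a) • (s • m)
    rw [show a • s = algebraMap F (PolyQuot F (e * p)) a * s from Algebra.smul_def a s, mul_smul]⟩
  haveI : Module.Finite F (PolyQuot F (e * p)) := polyQuot_finite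
  haveI : Module.Finite F M := Module.Finite.trans (PolyQuot F (e * p)) M
  set lsu : M →ₗ[PolyQuot F (e * p)] M := LinearMap.lsmul (PolyQuot F (e * p)) M u with hlsu_def
  set ℓu : M →ₗ[F] M := lsu.restrictScalars F with hℓu_def
  set UR : Submodule (PolyQuot F (e * p)) M := Submodule.map lsu ⊤ with hUR_def
  set Nf : Submodule F M := N.restrictScalars F with hNf_def
  set Vf : Submodule F M := Fil.restrictScalars F with hVf_def
  set FilNf : Submodule F M := (Fil ⊓ N).restrictScalars F with hFilNf_def
  set uFilf : Submodule F M := Submodule.map ℓu Vf with huFilf_def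
  set uNf : Submodule F M := Submodule.map ℓu Nf with huNf_def
  set Uf : Submodule F M := Submodule.map ℓu ⊤ with hUf_def
  set Kf : Submodule F M := FilNf ⊔ uFilf with hKf_def
  -- the key fact (*): N ⊓ uM = uN
  haveI : Module.Finite F ↥N :=
    Module.Finite.equiv ((Submodule.restrictScalarsEquiv F (PolyQuot F (e * p)) M
      N).restrictScalars F)
  haveI : Module.Finite (PolyQuot F (e * p)) ↥N :=
    Module.Finite.of_restrictScalars_finite F _ _
  haveI := hNfree
  have hstar : ∀ x : M, x ∈ N → x ∈ Uf → x ∈ uNf := by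
    intro x hxN hxU
    obtain ⟨m', -, rfl⟩ := hxU
    have hxzero : u ^ (e * p - 1) • (ℓu m') ∈ ({0} : Set M) := by
      have : u ^ (e * p - 1) • (ℓu m') = (u ^ (e * p)) • m' := by
        show u ^ (e * p - 1) • (u • m') = (u ^ (e * p)) • m'
        rw [smul_smul, ← pow_succ, show e * p - 1 + 1 = e * p from by omega]
      rw [this, hupow]
      exact zero_smul (PolyQuot F (e * p)) m'
    set B := Module.Free.chooseBasis (PolyQuot F (e * p)) ↥N with hB_def
    set nn : ↥N := ⟨ℓu m', hxN⟩ with hnn_def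
    have hnn0 : (u ^ (e * p - 1)) • nn = 0 := by
      apply Subtype.ext
      simpa using hxzero
    have hco : ∀ i, u ^ (e * p - 1) * (B.repr nn i) = 0 := by
      intro i
      have h1 := congrArg (fun z => B.repr z i) hnn0
      simpa [map_smul, smul_eq_mul] using h1
    choose c hc using fun i => polyQuot_div (q' := e * p - 1) (by omega) _ (hco i)
    refine ⟨(↑(∑ i, c i • B i) : M), Submodule.coe_mem _, ?_⟩
    have : u • (∑ i, c i • B i) = nn := by
      rw [Finset.smul_sum]
      have h2 : ∀ i ∈ Finset.univ, u • (c i • B i) = (B.repr nn i) • B i := by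
        intro i _
        rw [hc i, hu_def]; exact (mul_smul (qmk X : PolyQuot F (e * p)) (c i) (B i)).symm
      rw [Finset.sum_congr rfl h2]
      exact B.sum_repr nn
    show u • ((↑(∑ i, c i • B i)) : M) = ℓu m'
    calc u • ((↑(∑ i, c i • B i)) : M) = ↑(u • (∑ i, c i • B i)) := rfl
      _ = ↑nn := by rw [this]
      _ = ℓu m' := rfl
  -- quotient spaces
  set M2 := M ⧸ Uf with hM2
  set π : M →ₗ[F] M2 := Uf.mkQ with hπ_def
  set QN := M ⧸ Nf with hQN
  set ρ : M →ₗ[F] QN := Nf.mkQ with hρ_def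
  have hcomapNf : Nf ≤ Nf.comap ℓu := fun x hx => N.smul_mem u hx
  set 𝔘 : QN →ₗ[F] QN := Submodule.mapQ Nf Nf ℓu hcomapNf with h𝔘_def
  have hπsmul : ∀ (s : PolyQuot F (e * p)) (w : M), ∃ a : F, π (s • w) = a • π w := by
    intro s w
    obtain ⟨a, t, hs⟩ := polyQuot_decomp s
    refine ⟨a, ?_⟩
    rw [hs, add_smul, map_add]
    have h1 : π ((algebraMap F (PolyQuot F (e * p)) a) • w) = a • π w := by
      rw [algebraMap_smul, map_smul]
    have h2 : π ((qmk X * t) • w) = 0 := by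
      rw [mul_smul]
      have hmem : (qmk X : PolyQuot F (e * p)) • (t • w) ∈ Uf :=
        Submodule.mem_map.2 ⟨t • w, Submodule.mem_top, rfl⟩
      show Uf.mkQ _ = 0
      rw [Submodule.mkQ_apply, Submodule.Quotient.mk_eq_zero]
      exact hmem
    rw [h1, h2, add_zero]
  -- generators of Fil modulo Fil ⊓ N
  set Kf' : Submodule F ↥Vf := Kf.comap Vf.subtype with hKf'_def
  set m := Module.finrank F (↥Vf ⧸ Kf') with hm_def
  set bW := Module.finBasis F (↥Vf ⧸ Kf') with hbW_def
  have hsurj : ∀ j, ∃ y : ↥Vf, Kf'.mkQ y = bW j :=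
    fun j => Submodule.Quotient.mk_surjective _ (bW j)
  choose wl hwl using hsurj
  set xg : Fin m → M := fun j => (wl j : M) with hxg_def
  have hxgFil : ∀ j, xg j ∈ Fil := fun j => (wl j).2
  have hKfVf : Kf ≤ Vf := by
    refine sup_le (fun x hx => hx.1) ?_
    rintro x ⟨y, hy, rfl⟩
    exact Fil.smul_mem u hy
  have hgenV : Fil ≤ Submodule.span (PolyQuot F (e * p)) (Set.range xg) ⊔ (Fil ⊓ N) := by
    refine nak_lemma u (e * p) hupow _ _ ?_
    intro v hv
    set vv : ↥Vf := ⟨v, hv⟩ with hvv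
    set cf : Fin m → F := fun j => bW.repr (Kf'.mkQ vv) j with hcf
    have h0 : Kf'.mkQ (vv - ∑ j, cf j • wl j) = 0 := by
      rw [map_sub, map_sum]
      simp only [map_smul, hwl]
      rw [sub_eq_zero]
      exact (bW.sum_repr (Kf'.mkQ vv)).symm
    have hk : vv - ∑ j, cf j • wl j ∈ Kf' := by
      have h1 : vv - ∑ j, cf j • wl j ∈ LinearMap.ker Kf'.mkQ := LinearMap.mem_ker.2 h0
      rwa [Submodule.ker_mkQ] at h1
    have hcoe : ((∑ j, cf j • wl j : ↥Vf) : M) = ∑ j, cf j • xg j := by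
      rw [show ((∑ j, cf j • wl j : ↥Vf) : M) = Vf.subtype (∑ j, cf j • wl j) from rfl,
        map_sum]
      rfl
    have hv_eq : v = (∑ j, cf j • xg j) + ↑(vv - ∑ j, cf j • wl j) := by
      rw [← hcoe]
      have : ((vv - ∑ j, cf j • wl j : ↥Vf) : M) = v - ((∑ j, cf j • wl j : ↥Vf) : M) := rfl
      rw [this]
      abel
    rw [hv_eq]
    refine Submodule.add_mem _ ?_ ?_
    · refine Submodule.mem_sup_left (Submodule.mem_sup_left ?_)
      refine Submodule.sum_mem _ (fun j _ => ?_)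
      have hj : xg j ∈ Submodule.span (PolyQuot F (e * p)) (Set.range xg) :=
        Submodule.subset_span (Set.mem_range_self j)
      have h' : cf j • xg j = (algebraMap F (PolyQuot F (e * p)) (cf j)) • xg j :=
        (algebraMap_smul _ _ _).symm
      rw [h']
      exact Submodule.smul_mem _ _ hj
    · have hkm : (↑(vv - ∑ j, cf j • wl j) : M) ∈ Kf := hk
      obtain ⟨y, hy, z, hz, hyz⟩ := Submodule.mem_sup.1 hkm
      rw [← hyz]
      refine Submodule.add_mem _ (Submodule.mem_sup_left (Submodule.mem_sup_right hy)) ?_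
      obtain ⟨w', hw', rfl⟩ := hz
      exact Submodule.mem_sup_right ⟨w', hw', rfl⟩
  set FilNset : Set ↥Fil := {x : ↥Fil | (x : M) ∈ N} with hFilNset
  set T : Submodule F M2 := Submodule.span F (⇑π '' (⇑φr '' FilNset)) with hT_def
  set xgπ : Fin m → M2 := fun j => π (φr ⟨xg j, hxgFil j⟩) with hxgπ_def
  have hπφsmul : ∀ (s : PolyQuot F (e * p)) (y : ↥Fil),
      ∃ a : F, π (φr (s • y)) = a • π (φr y) := by
    intro s y
    obtain ⟨a, ha⟩ := hπsmul (φ s) (φr y)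
    exact ⟨a, by rw [hsemi]; exact ha⟩
  have htop : ∀ w : M, π w ∈ Submodule.span F (Set.range xgπ) ⊔ T := by
    intro w
    have hw : w ∈ Submodule.span (PolyQuot F (e * p)) (Set.range ⇑φr) := by
      rw [hgen]; trivial
    induction hw using Submodule.span_induction with
    | mem x hx =>
        obtain ⟨y, rfl⟩ := hx
        obtain ⟨sS, hsS, z, hz, hsz⟩ := Submodule.mem_sup.1 (hgenV y.2)
        obtain ⟨cR, hcR⟩ := (Submodule.mem_span_range_iff_exists_fun _).1 hsS
        have hzFil : z ∈ Fil := hz.1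
        have hzN : z ∈ N := hz.2
        have hY : y = (∑ j, cR j • (⟨xg j, hxgFil j⟩ : ↥Fil)) + ⟨z, hzFil⟩ := by
          apply Subtype.ext
          have hc1 : ((∑ j, cR j • (⟨xg j, hxgFil j⟩ : ↥Fil) + ⟨z, hzFil⟩ : ↥Fil) : M)
              = ∑ j, cR j • xg j + z := by
            simp
          rw [hc1, hcR]
          exact hsz.symm
        rw [hY, map_add, map_sum, map_add, map_sum]
        refine Submodule.add_mem _ ?_ ?_
        · refine Submodule.sum_mem _ (fun j _ => ?_)
          obtain ⟨a, ha⟩ := hπφsmul (cR j) ⟨xg j, hxgFil j⟩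
          rw [ha]
          refine Submodule.mem_sup_left (Submodule.smul_mem _ _ (Submodule.subset_span ?_))
          exact ⟨j, rfl⟩
        · refine Submodule.mem_sup_right (Submodule.subset_span ?_)
          exact ⟨φr ⟨z, hzFil⟩, ⟨⟨z, hzFil⟩, hzN, rfl⟩, rfl⟩
    | zero =>
        rw [map_zero]
        exact Submodule.zero_mem _
    | add x y hx hy ihx ihy =>
        rw [map_add]
        exact Submodule.add_mem _ ihx ihy
    | smul s x hx ih =>
        obtain ⟨a, ha⟩ := hπsmul s x
        rw [ha]
        exact Submodule.smul_mem _ _ ih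
  set t := Module.finrank F ↥T with ht_def
  have hsup_top : Submodule.span F (Set.range xgπ) ⊔ T = ⊤ := by
    rw [eq_top_iff]
    rintro v -
    obtain ⟨w, rfl⟩ := Submodule.mkQ_surjective Uf v
    exact htop w
  have hd_le : Module.finrank F M2 ≤ m + t := by
    have h1 := Submodule.finrank_sup_add_finrank_inf_eq (Submodule.span F (Set.range xgπ)) T
    have h2 : Module.finrank F ↥(Submodule.span F (Set.range xgπ)) ≤ m := by
      refine le_trans (finrank_span_le_card (R := F) (Set.range xgπ)) ?_
      rw [Set.toFinset_range]
      exact le_trans Finset.card_image_le (by simp)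
    have h3 : Module.finrank F ↥(⊤ : Submodule F M2) = Module.finrank F M2 :=
      finrank_top F M2
    rw [hsup_top, h3] at h1
    omega
  -- dimension bookkeeping
  have hA1 : m + Module.finrank F ↥Kf' = Module.finrank F ↥Vf :=
    Submodule.finrank_quotient_add_finrank Kf'
  have hA2 : Module.finrank F ↥Kf' = Module.finrank F ↥Kf :=
    LinearEquiv.finrank_eq (Submodule.comapSubtypeEquivOfLe hKfVf)
  have hFilNfVf : FilNf ≤ Vf := fun x hx => hx.1
  set YF := Submodule.map ρ Vf with hYF_def
  have hA3 : Module.finrank F ↥Vf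
      = Module.finrank F ↥YF + Module.finrank F ↥FilNf := by
    have h1 := LinearMap.finrank_range_add_finrank_ker (ρ.comp Vf.subtype)
    have h2 : LinearMap.range (ρ.comp Vf.subtype) = YF := by
      rw [LinearMap.range_comp, Submodule.range_subtype]
    have h3 : LinearMap.ker (ρ.comp Vf.subtype) = Submodule.comap Vf.subtype FilNf := by
      rw [LinearMap.ker_comp, hρ_def, Submodule.ker_mkQ]
      ext x
      simp only [Submodule.mem_comap, Submodule.restrictScalars_mem, Submodule.mem_inf]
      exact ⟨fun h => ⟨x.2, h⟩, fun h => h.2⟩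
    have h4 : Module.finrank F ↥(Submodule.comap Vf.subtype FilNf)
        = Module.finrank F ↥FilNf :=
      LinearEquiv.finrank_eq (Submodule.comapSubtypeEquivOfLe hFilNfVf)
    rw [h2, h3, h4] at h1
    omega
  have hπρcomm : 𝔘.comp ρ = ρ.comp ℓu := Submodule.mapQ_mkQ (p := Nf) Nf ℓu
  have hUYF : Submodule.map 𝔘 YF = Submodule.map ρ uFilf := by
    rw [hYF_def, ← Submodule.map_comp, hπρcomm, Submodule.map_comp]
  have hFilNfKf : FilNf ≤ Kf := le_sup_left
  have hA4 : Module.finrank F ↥Kf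
      = Module.finrank F ↥(Submodule.map 𝔘 YF) + Module.finrank F ↥FilNf := by
    have h1 := LinearMap.finrank_range_add_finrank_ker (ρ.comp Kf.subtype)
    have h2 : LinearMap.range (ρ.comp Kf.subtype) = Submodule.map 𝔘 YF := by
      rw [LinearMap.range_comp, Submodule.range_subtype, hUYF, hKf_def, Submodule.map_sup]
      have hb : Submodule.map ρ FilNf = ⊥ := by
        rw [eq_bot_iff]
        rintro _ ⟨y, hy, rfl⟩
        simp only [Submodule.mem_bot]
        rw [hρ_def, Submodule.mkQ_apply, Submodule.Quotient.mk_eq_zero]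
        exact hy.2
      rw [hb, bot_sup_eq]
    have h3 : LinearMap.ker (ρ.comp Kf.subtype) = Submodule.comap Kf.subtype FilNf := by
      rw [LinearMap.ker_comp, hρ_def, Submodule.ker_mkQ]
      ext x
      simp only [Submodule.mem_comap, Submodule.restrictScalars_mem, Submodule.mem_inf]
      exact ⟨fun h => ⟨hKfVf x.2, h⟩, fun h => h.2⟩
    have h4 : Module.finrank F ↥(Submodule.comap Kf.subtype FilNf)
        = Module.finrank F ↥FilNf :=
      LinearEquiv.finrank_eq (Submodule.comapSubtypeEquivOfLe hFilNfKf)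
    rw [h2, h3, h4] at h1
    omega
  set f3 : ↥YF →ₗ[F] QN := 𝔘.comp YF.subtype with hf3_def
  have hA5 : Module.finrank F ↥YF
      = Module.finrank F ↥(Submodule.map 𝔘 YF) + Module.finrank F ↥(LinearMap.ker f3) := by
    have h1 := LinearMap.finrank_range_add_finrank_ker f3
    have h2 : LinearMap.range f3 = Submodule.map 𝔘 YF := by
      rw [hf3_def, LinearMap.range_comp, Submodule.range_subtype]
    rw [h2] at h1
    omega
  have hA6 : Module.finrank F ↥(LinearMap.ker f3)
      ≤ Module.finrank F ↥(LinearMap.ker 𝔘) := by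
    have hmem : ∀ c : ↥(LinearMap.ker f3),
        (YF.subtype.comp (LinearMap.ker f3).subtype) c ∈ LinearMap.ker 𝔘 := by
      intro c
      have hc := c.2
      rw [LinearMap.mem_ker] at hc ⊢
      exact hc
    refine LinearMap.finrank_le_finrank_of_injective
      (f := LinearMap.codRestrict (LinearMap.ker 𝔘)
        (YF.subtype.comp (LinearMap.ker f3).subtype) hmem) ?_
    intro a b hab
    apply Subtype.ext
    apply Subtype.ext
    have := congrArg Subtype.val hab
    simpa using this
  have hA7 := LinearMap.finrank_range_add_finrank_ker 𝔘
  have hA8 : Module.finrank F QN + Module.finrank F ↥Nf = Module.finrank F M :=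
    Submodule.finrank_quotient_add_finrank Nf
  have hA9 : Module.finrank F M2 + Module.finrank F ↥Uf = Module.finrank F M :=
    Submodule.finrank_quotient_add_finrank Uf
  have huNfNf : uNf ≤ Nf := by
    rintro _ ⟨y, hy, rfl⟩
    exact N.smul_mem u hy
  have huNfUf : uNf ≤ Uf := by
    rintro _ ⟨y, hy, rfl⟩
    exact ⟨y, trivial, rfl⟩
  have hA10 : Module.finrank F ↥Nf
      = Module.finrank F ↥(Submodule.map π Nf) + Module.finrank F ↥uNf := by
    have h1 := LinearMap.finrank_range_add_finrank_ker (π.comp Nf.subtype)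
    have h2 : LinearMap.range (π.comp Nf.subtype) = Submodule.map π Nf := by
      rw [LinearMap.range_comp, Submodule.range_subtype]
    have h3 : LinearMap.ker (π.comp Nf.subtype) = Submodule.comap Nf.subtype uNf := by
      rw [LinearMap.ker_comp, hπ_def, Submodule.ker_mkQ]
      ext x
      simp only [Submodule.mem_comap]
      exact ⟨fun h => hstar (x : M) x.2 h, fun h => huNfUf h⟩
    have h4 : Module.finrank F ↥(Submodule.comap Nf.subtype uNf)
        = Module.finrank F ↥uNf :=
      LinearEquiv.finrank_eq (Submodule.comapSubtypeEquivOfLe huNfNf)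
    rw [h2, h3, h4] at h1
    omega
  have hA11 : Module.finrank F ↥Uf
      = Module.finrank F ↥(LinearMap.range 𝔘) + Module.finrank F ↥uNf := by
    have h1 := LinearMap.finrank_range_add_finrank_ker (ρ.comp Uf.subtype)
    have h2 : LinearMap.range (ρ.comp Uf.subtype) = LinearMap.range 𝔘 := by
      rw [LinearMap.range_comp, Submodule.range_subtype]
      rw [LinearMap.range_eq_map 𝔘]
      have htop' : (⊤ : Submodule F QN) = Submodule.map ρ ⊤ := by
        rw [Submodule.map_top, hρ_def, Submodule.range_mkQ]
      rw [htop']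
      rw [← Submodule.map_comp]
      rw [← hπρcomm, Submodule.map_comp]
    have h3 : LinearMap.ker (ρ.comp Uf.subtype) = Submodule.comap Uf.subtype uNf := by
      rw [LinearMap.ker_comp, hρ_def, Submodule.ker_mkQ]
      ext x
      simp only [Submodule.mem_comap]
      exact ⟨fun h => hstar (x : M) h x.2, fun h => huNfNf h⟩
    have h4 : Module.finrank F ↥(Submodule.comap Uf.subtype uNf)
        = Module.finrank F ↥uNf :=
      LinearEquiv.finrank_eq (Submodule.comapSubtypeEquivOfLe huNfUf)
    rw [h2, h3, h4] at h1
    omega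
  have hc't : Module.finrank F ↥(Submodule.map π Nf) ≤ t := by omega
  -- endgame
  have hTle : T ≤ Submodule.map π Nf := by
    rw [hT_def]
    refine Submodule.span_le.2 ?_
    rintro _ ⟨_, ⟨Z, hZ, rfl⟩, rfl⟩
    exact ⟨φr Z, hNstab Z hZ, rfl⟩
  have hTeq : T = Submodule.map π Nf :=
    Submodule.eq_of_le_of_finrank_le hTle hc't
  set G := Submodule.span (PolyQuot F (e * p)) (⇑φr '' FilNset) with hG_def
  have hGN : G ≤ N := by
    rw [hG_def]
    refine Submodule.span_le.2 ?_
    rintro _ ⟨Z, hZ, rfl⟩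
    exact hNstab Z hZ
  have hNle : ∀ n, n ∈ N → n ∈ G ⊔ UR := by
    intro n hn
    have h1 : π n ∈ T := by
      rw [hTeq]
      exact ⟨n, hn, rfl⟩
    have h2 : T ≤ Submodule.map π (G.restrictScalars F) := by
      rw [hT_def]
      refine Submodule.span_le.2 ?_
      rintro _ ⟨_, ⟨Z, hZ, rfl⟩, rfl⟩
      exact ⟨φr Z, Submodule.subset_span ⟨Z, hZ, rfl⟩, rfl⟩
    obtain ⟨g, hg, hπg⟩ := h2 h1
    have hng : n - g ∈ Uf := by
      have h0 : π (n - g) = 0 := by rw [map_sub, hπg, sub_self]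
      rwa [hπ_def, Submodule.mkQ_apply, Submodule.Quotient.mk_eq_zero] at h0
    have hngUR : n - g ∈ UR := by
      obtain ⟨y, -, hy⟩ := hng
      exact ⟨y, trivial, hy⟩
    exact Submodule.mem_sup.2 ⟨g, hg, n - g, hngUR, by abel⟩
  have hNG : N ≤ G ⊔ Submodule.map lsu N := by
    intro n hn
    obtain ⟨g, hg, w, hw, hgw⟩ := Submodule.mem_sup.1 (hNle n hn)
    have hwN : w ∈ N := by
      have hwng : w = n - g := by rw [← hgw]; abel
      rw [hwng]
      exact N.sub_mem hn (hGN hg)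
    have hwUf : w ∈ Uf := by
      obtain ⟨y, -, hy⟩ := hw
      exact ⟨y, trivial, hy⟩
    obtain ⟨y, hy, hyw⟩ := hstar w hwN hwUf
    exact Submodule.mem_sup.2 ⟨g, hg, w, ⟨y, hy, hyw⟩, hgw⟩
  have hfinal : N ≤ G := nak_lemma u (e * p) hupow G N hNG
  exact le_antisymm hGN hfinal
end

section
/- Let p be a prime, k a field of characteristic p, and e ≥ 1, 0 ≤ r ≤ p − 2 integers. Set S̄ := k[u]/(u^{ep}) and let φ : S̄ → S̄ be the absolute Frobenius x ↦ x^{p} (so φ(Σ aᵢuⁱ) = Σ aᵢ^{p} u^{ip}). Let M be a finite free S̄-module of rank n, Fil ⊆ M an S̄-submodule with u^{er}M ⊆ Fil, and φ_r : Fil → M an additive map with φ_r(s·x) = φ(s)·φ_r(x) for all s ∈ S̄, x ∈ Fil, whose image generates M over S̄. Then: (a) Fil/u^{e}·Fil is a free k[u]/(u^{e})-module of rank n; and (b) the S̄-linear map S̄ ⊗_{ψ, k[u]/(u^{e})} (Fil/u^{e}Fil) → M given by s ⊗ x̄ ↦ s·φ_r(x) is an isomorphism, where ψ : k[u]/(u^{e})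 → S̄ is the ring homomorphism x ↦ x^{p}. -/
open Polynomial TensorProduct

set_option synthInstance.maxHeartbeats 1000000
set_option maxHeartbeats 2000000

set_option synthInstance.maxHeartbeats 2000000
set_option maxHeartbeats 16000000

/-- Lemma A.2.2. For a Breuil-module datum `(M, Fil, φ_r)` over
`S̄ = k[u]/(u^{ep})` with `M` free of rank `n`, `u^{er}M ⊆ Fil`, `φ_r` additive and
Frobenius-semilinear (`φ_r(s·x) = s^p·φ_r(x)`) with image generating `M`:
(a) `Fil/u^e·Fil` is free of rank `n` over `T = k[u]/(u^e)`; and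
(b) the `S̄`-linear map `S̄ ⊗_{ψ,T} (Fil/u^e Fil) → M`, `s ⊗ x̄ ↦ s·φ_r(x)`, is an
isomorphism, where the `T`-algebra structure `ψ : T → S̄` is `x ↦ x^p`. -/
theorem stmt_10 (p : ℕ) (hp : p.Prime) {k : Type*} [Field k] [CharP k p]
    (e r n : ℕ) (he : 1 ≤ e) (hr : r ≤ p - 2)
    {M : Type*} [AddCommGroup M] [Module (PolyQuot k (e * p)) M]
    (bM : Module.Basis (Fin n) (PolyQuot k (e * p)) M)
    (Fil : Submodule (PolyQuot k (e * p)) M)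
    (hur : ∀ x : M, (qmk (X ^ (e * r)) : PolyQuot k (e * p)) • x ∈ Fil)
    (φr : ↥Fil →+ M)
    (hsemi : ∀ (s : PolyQuot k (e * p)) (x : ↥Fil), φr (s • x) = s ^ p • φr x)
    (hgen : Submodule.span (PolyQuot k (e * p)) (Set.range ⇑φr) = ⊤)
    [Module (PolyQuot k e)
      (↥Fil ⧸ (Ideal.span {(qmk (X ^ e) : PolyQuot k (e * p))} •
        (⊤ : Submodule (PolyQuot k (e * p)) ↥Fil)))]
    (hTQ : ∀ (g : Polynomial k)
        (q : ↥Fil ⧸ (Ideal.span {(qmk (X ^ e) : PolyQuot k (e * p))} •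
          (⊤ : Submodule (PolyQuot k (e * p)) ↥Fil))),
        (qmk g : PolyQuot k e) • q = (qmk g : PolyQuot k (e * p)) • q)
    [Algebra (PolyQuot k e) (PolyQuot k (e * p))]
    (halg : ∀ g : Polynomial k,
      algebraMap (PolyQuot k e) (PolyQuot k (e * p)) (qmk g) = qmk (g ^ p)) :
    Nonempty (Module.Basis (Fin n) (PolyQuot k e)
        (↥Fil ⧸ (Ideal.span {(qmk (X ^ e) : PolyQuot k (e * p))} •
          (⊤ : Submodule (PolyQuot k (e * p)) ↥Fil)))) ∧
    ∃ Φ : (TensorProduct (PolyQuot k e) (PolyQuot k (e * p))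
        (↥Fil ⧸ (Ideal.span {(qmk (X ^ e) : PolyQuot k (e * p))} •
          (⊤ : Submodule (PolyQuot k (e * p)) ↥Fil)))) →ₗ[PolyQuot k (e * p)] M,
      (∀ (s : PolyQuot k (e * p)) (x : ↥Fil),
        Φ (s ⊗ₜ[PolyQuot k e] (Submodule.Quotient.mk x)) = s • φr x) ∧
      Function.Bijective Φ := by
  classical
  have hp2 : 2 ≤ p := hp.two_le
  have hrp : r + 1 ≤ p := by omega
  have hA : e * r + e ≤ e * p := by
    calc e * r + e = e * (r + 1) := by ring
    _ ≤ e * p := Nat.mul_le_mul_left e hrp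
  have hee : e ≤ e * p := le_trans (Nat.le_add_left e (e * r)) hA
  have hB : e * r ≤ e * p - e := Nat.le_sub_of_add_le hA
  have hsub1 : e + (e * p - e) = e * p := Nat.add_sub_cancel' hee
  have hsub2 : e * r + (e * p - e - e * r) = e * p - e := Nat.add_sub_cancel' hB
  -- the reduction map π : k[u]^n → M
  set π : (Fin n → Polynomial k) → M :=
    fun x => ∑ i, (qmk (x i) : PolyQuot k (e * p)) • bM i with hπ
  have hπadd : ∀ x y, π (x + y) = π x + π y := by
    intro x y
    simp only [hπ, Pi.add_apply, map_add, add_smul, Finset.sum_add_distrib]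
  have hπsub : ∀ x y, π (x - y) = π x - π y := by
    intro x y
    simp only [hπ, Pi.sub_apply, map_sub, sub_smul, Finset.sum_sub_distrib]
  have hπzero : π 0 = 0 := by simp [hπ]; exact Finset.sum_eq_zero (fun i _ => Module.zero_smul _)
  have hπsmul : ∀ (g : Polynomial k) x, π (g • x) = (qmk g : PolyQuot k (e * p)) • π x := by
    intro g x
    simp only [hπ, Pi.smul_apply, smul_eq_mul, map_mul, Finset.smul_sum, mul_smul]
  have hπker : ∀ x, π x = 0 → ∀ i, (X : Polynomial k) ^ (e * p) ∣ x i := by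
    intro x hx i
    have h0 := Fintype.linearIndependent_iff.mp bM.linearIndependent
      (fun i => (qmk (x i) : PolyQuot k (e * p))) hx i
    rwa [Ideal.Quotient.eq_zero_iff_mem, Ideal.mem_span_singleton] at h0
  have hπsurj : ∀ m : M, ∃ x, π x = m := by
    intro m
    have h := fun i => Ideal.Quotient.mk_surjective
      (I := Ideal.span {(X : Polynomial k) ^ (e * p)}) (bM.repr m i)
    choose x hx using h
    refine ⟨x, ?_⟩
    simp only [hπ, hx]
    exact bM.sum_repr m
  have hmem1 : ∀ m : M, (qmk (X ^ (e * p - e)) : PolyQuot k (e * p)) • m ∈ Fil := by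
    intro m
    rw [← hsub2, pow_add, map_mul, mul_smul]
    exact hur _
  -- the lifted submodule of k[u]^n
  set FilT : Submodule (Polynomial k) (Fin n → Polynomial k) :=
    { carrier := {x | π x ∈ Fil}
      add_mem' := fun {a b} ha hb => by
        simp only [Set.mem_setOf_eq] at *
        rw [hπadd]; exact Fil.add_mem ha hb
      zero_mem' := by
        simp only [Set.mem_setOf_eq, hπzero]; exact Fil.zero_mem
      smul_mem' := fun g x hx => by
        simp only [Set.mem_setOf_eq] at *
        rw [hπsmul]; exact Fil.smul_mem _ hx } with hFilT
  have hmemFilT : ∀ x, x ∈ FilT ↔ π x ∈ Fil := fun x => Iff.rfl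
  have hkerstep : ∀ x : Fin n → Polynomial k, π x = 0 →
      ∃ z, z ∈ FilT ∧ x = (X : Polynomial k) ^ e • z := by
    intro x hx
    choose y hy using fun i => hπker x hx i
    refine ⟨(X : Polynomial k) ^ (e * p - e) • y, ?_, ?_⟩
    · rw [hmemFilT, hπsmul]
      exact hmem1 _
    · funext i
      show x i = ((X : Polynomial k) ^ e • ((X : Polynomial k) ^ (e * p - e) • y)) i
      simp only [Pi.smul_apply, smul_eq_mul]
      rw [hy i, ← mul_assoc, ← pow_add, hsub1]
  obtain ⟨m, c⟩ := Submodule.basisOfPid (Pi.basisFun (Polynomial k) (Fin n)) FilT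
  haveI : Module.Finite (Polynomial k) FilT := Module.Finite.of_basis c
  have hfr : Module.finrank (Polynomial k) ↥FilT = m := by
    rw [Module.finrank_eq_card_basis c, Fintype.card_fin]
  have hmn : m = n := by
    apply le_antisymm
    · have li : LinearIndependent (Polynomial k)
          (FilT.subtype ∘ (c : Fin m → ↥FilT)) :=
        c.linearIndependent.map' FilT.subtype (Submodule.ker_subtype _)
      have h2 := li.fintype_card_le_finrank
      simpa [Module.finrank_pi] using h2
    · -- n ≤ m : the scaled standard vectors lie in FilT and are independent
      set L : (Fin n → Polynomial k) →ₗ[Polynomial k] (Fin n → Polynomial k) :=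
        (X : Polynomial k) ^ (e * r) • LinearMap.id with hL
    
      have hkerL : LinearMap.ker L = ⊥ := by
        rw [LinearMap.ker_eq_bot']
        intro x hx
        funext i
        have := congrFun (congrArg (fun z => (z : Fin n → Polynomial k)) hx) i
        simp only [hL, LinearMap.smul_apply, LinearMap.id_apply, Pi.smul_apply,
          smul_eq_mul] at this ⊢
        rcases mul_eq_zero.mp this with h | h
        · exact absurd h (pow_ne_zero _ X_ne_zero)
        · simpa using h
      have liu : LinearIndependent (Polynomial k)
          (⇑L ∘ ⇑(Pi.basisFun (Polynomial k) (Fin n))) :=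
        (Pi.basisFun (Polynomial k) (Fin n)).linearIndependent.map' L hkerL
      have huvec_mem : ∀ i, (⇑L ∘ ⇑(Pi.basisFun (Polynomial k) (Fin n))) i ∈ FilT := by
        intro i
        rw [hmemFilT]
        have hh : (⇑L ∘ ⇑(Pi.basisFun (Polynomial k) (Fin n))) i
            = (X : Polynomial k) ^ (e * r) • (Pi.basisFun (Polynomial k) (Fin n)) i := rfl
        rw [hh, hπsmul]
        exact hur _
      set w : Fin n → ↥FilT := fun i => ⟨_, huvec_mem i⟩ with hwdef
      have liw : LinearIndependent (Polynomial k) w :=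
        LinearIndependent.of_comp FilT.subtype liu
      have h3 := liw.fintype_card_le_finrank
      simpa [hfr] using h3
  set cn : Module.Basis (Fin n) (Polynomial k) ↥FilT := c.reindex (finCongr hmn) with hcn
  -- the projection FilT → Fil
  set ρ : ↥FilT → ↥Fil := fun x => ⟨π (x : Fin n → Polynomial k), x.2⟩ with hρ
  have hρ0 : ρ 0 = 0 := Subtype.ext hπzero
  have hρadd : ∀ x y, ρ (x + y) = ρ x + ρ y := fun x y => Subtype.ext (hπadd _ _)
  have hρsmul : ∀ (g : Polynomial k) x, ρ (g • x) = (qmk g : PolyQuot k (e * p)) • ρ x :=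
    fun g x => Subtype.ext (hπsmul g _)
  have hρsurj : ∀ y : ↥Fil, ∃ x : ↥FilT, ρ x = y := by
    intro y
    obtain ⟨x0, hx0⟩ := hπsurj (y : M)
    have hx0m : x0 ∈ FilT := by rw [hmemFilT, hx0]; exact y.2
    exact ⟨⟨x0, hx0m⟩, Subtype.ext hx0⟩
  -- facts about the submodule N = (u^e) • Fil
  have hNex : ∀ z : ↥Fil, z ∈ (Ideal.span {(qmk (X ^ e) : PolyQuot k (e * p))} •
      (⊤ : Submodule (PolyQuot k (e * p)) ↥Fil)) →
      ∃ y : ↥Fil, z = (qmk (X ^ e) : PolyQuot k (e * p)) • y := by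
    intro z hz
    refine Submodule.smul_induction_on hz ?_ ?_
    · intro a ha x _
      obtain ⟨b, hb⟩ := Ideal.mem_span_singleton'.mp ha
      exact ⟨b • x, by rw [← hb, mul_comm b, mul_smul]⟩
    · rintro x y ⟨x', rfl⟩ ⟨y', rfl⟩
      exact ⟨x' + y', by rw [smul_add]⟩
  have hXep0 : (qmk (X ^ e) : PolyQuot k (e * p)) ^ p = 0 := by
    have h1 : (qmk (X ^ e) : PolyQuot k (e * p)) ^ p
        = (qmk ((X : Polynomial k) ^ (e * p)) : PolyQuot k (e * p)) := by
      rw [← map_pow, ← pow_mul]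
    rw [h1]
    exact Ideal.Quotient.eq_zero_iff_mem.mpr
      (Ideal.mem_span_singleton.mpr dvd_rfl)
  have hφrN : ∀ z : ↥Fil, z ∈ (Ideal.span {(qmk (X ^ e) : PolyQuot k (e * p))} •
      (⊤ : Submodule (PolyQuot k (e * p)) ↥Fil)) → φr z = 0 := by
    intro z hz
    obtain ⟨y, hy⟩ := hNex z hz
    rw [hy, hsemi, hXep0]; exact Module.zero_smul _
  -- the map θ : FilT → Fil/u^e Fil
  set θ : ↥FilT →+ (↥Fil ⧸ (Ideal.span {(qmk (X ^ e) : PolyQuot k (e * p))} •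
      (⊤ : Submodule (PolyQuot k (e * p)) ↥Fil))) :=
    { toFun := fun x => Submodule.Quotient.mk (ρ x)
      map_zero' := by
        show Submodule.Quotient.mk (ρ 0) = 0
        rw [hρ0, Submodule.Quotient.mk_zero]
      map_add' := fun x y => by
        show Submodule.Quotient.mk (ρ (x + y)) =
          Submodule.Quotient.mk (ρ x) + Submodule.Quotient.mk (ρ y)
        rw [hρadd, Submodule.Quotient.mk_add] } with hθ
  have hθapp : ∀ x, θ x = Submodule.Quotient.mk (ρ x) := fun _ => rfl
  have hθsmul : ∀ (g : Polynomial k) (x : ↥FilT),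
      θ (g • x) = (qmk g : PolyQuot k e) • θ x := by
    intro g x
    calc θ (g • x) = Submodule.Quotient.mk ((qmk g : PolyQuot k (e * p)) • ρ x) := by
          rw [hθapp, hρsmul]
    _ = (qmk g : PolyQuot k (e * p)) • Submodule.Quotient.mk (ρ x) :=
          Submodule.Quotient.mk_smul _ _ _
    _ = (qmk g : PolyQuot k e) • θ x := (hTQ g _).symm
  set v : Fin n → (↥Fil ⧸ (Ideal.span {(qmk (X ^ e) : PolyQuot k (e * p))} •
      (⊤ : Submodule (PolyQuot k (e * p)) ↥Fil))) := fun i => θ (cn i) with hv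
  -- spanning
  have hspan : ∀ q, q ∈ Submodule.span (PolyQuot k e) (Set.range v) := by
    intro q
    obtain ⟨y, rfl⟩ := Submodule.Quotient.mk_surjective _ q
    obtain ⟨x0, hx0⟩ := hρsurj y
    rw [← hx0, ← hθapp]
    clear hx0
    have hx : x0 ∈ Submodule.span (Polynomial k) (Set.range cn) := by
      rw [Module.Basis.span_eq]; trivial
    induction hx using Submodule.span_induction with
    | mem z hz =>
        obtain ⟨i, rfl⟩ := hz
        exact Submodule.subset_span ⟨i, rfl⟩
    | zero => rw [map_zero]; exact Submodule.zero_mem _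
    | add a b _ _ ha hb => rw [map_add]; exact Submodule.add_mem _ ha hb
    | smul g a _ ha => rw [hθsmul]; exact Submodule.smul_mem _ _ ha
  -- linear independence
  have hli : LinearIndependent (PolyQuot k e) v := by
    rw [Fintype.linearIndependent_iff]
    intro g hg
    choose G hG using fun i => Ideal.Quotient.mk_surjective
      (I := Ideal.span {(X : Polynomial k) ^ e}) (g i)
    set w : ↥FilT := ∑ i, G i • cn i with hw
    have hθw : θ w = 0 := by
      rw [hw, map_sum, Finset.sum_congr rfl (fun i _ => by rw [hθsmul, hG])]
      exact hg
    have hmemN : ρ w ∈ (Ideal.span {(qmk (X ^ e) : PolyQuot k (e * p))} •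
        (⊤ : Submodule (PolyQuot k (e * p)) ↥Fil)) := by
      rw [hθapp] at hθw
      exact (Submodule.Quotient.mk_eq_zero _).mp hθw
    obtain ⟨y, hy⟩ := hNex _ hmemN
    obtain ⟨x1, hx1⟩ := hρsurj y
    have hπdiff : π ((w : Fin n → Polynomial k) - (X : Polynomial k) ^ e • (x1 : Fin n → Polynomial k)) = 0 := by
      rw [hπsub, hπsmul]
      have h1 : π (w : Fin n → Polynomial k) = ((ρ w : ↥Fil) : M) := rfl
      have h2 : π (x1 : Fin n → Polynomial k) = ((ρ x1 : ↥Fil) : M) := rfl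
      rw [h1, h2, hy, hx1, Submodule.coe_smul, sub_self]
    obtain ⟨z, hzm, hz⟩ := hkerstep _ hπdiff
    have hcoord : (w : Fin n → Polynomial k) =
        (X : Polynomial k) ^ e • ((x1 : Fin n → Polynomial k) + z) := by
      rw [smul_add, ← hz]
      abel
    have hwFilT : w = (X : Polynomial k) ^ e • (x1 + ⟨z, hzm⟩) := by
      apply Subtype.ext
      rw [hcoord]
      rfl
    intro i
    have h4 : cn.repr w i = G i := by rw [hw, cn.repr_sum_self]
    have h5 : cn.repr w i = X ^ e * cn.repr (x1 + ⟨z, hzm⟩) i := by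
      rw [hwFilT, map_smul, Finsupp.smul_apply, smul_eq_mul]
    rw [← hG i, Ideal.Quotient.eq_zero_iff_mem, Ideal.mem_span_singleton]
    exact ⟨_, by rw [← h4, h5]⟩
  set bQ : Module.Basis (Fin n) (PolyQuot k e)
      (↥Fil ⧸ (Ideal.span {(qmk (X ^ e) : PolyQuot k (e * p))} •
        (⊤ : Submodule (PolyQuot k (e * p)) ↥Fil))) :=
    Module.Basis.mk hli (fun q _ => hspan q) with hbQ
  refine ⟨⟨bQ⟩, ?_⟩
  -- part (b)
  letI instTM : Module (PolyQuot k e) M :=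
    Module.compHom M (algebraMap (PolyQuot k e) (PolyQuot k (e * p)))
  have hTsmul : ∀ (t : PolyQuot k e) (x : M),
      t • x = algebraMap (PolyQuot k e) (PolyQuot k (e * p)) t • x := fun _ _ => rfl
  haveI : IsScalarTower (PolyQuot k e) (PolyQuot k (e * p)) M := by
    constructor
    intro t s x
    rw [Algebra.smul_def, mul_smul]
    exact (hTsmul t (s • x)).symm
  set F : (↥Fil ⧸ (Ideal.span {(qmk (X ^ e) : PolyQuot k (e * p))} •
      (⊤ : Submodule (PolyQuot k (e * p)) ↥Fil))) → M :=
    fun q => Quotient.liftOn' q (fun x => φr x) (by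
      intro a b hab
      have h : a - b ∈ (Ideal.span {(qmk (X ^ e) : PolyQuot k (e * p))} •
          (⊤ : Submodule (PolyQuot k (e * p)) ↥Fil)) :=
        (Submodule.quotientRel_def _).mp hab
      have h0 := hφrN _ h
      rw [map_sub, sub_eq_zero] at h0
      exact h0) with hF
  have hFmk : ∀ x : ↥Fil, F (Submodule.Quotient.mk x) = φr x := fun _ => rfl
  set f : (↥Fil ⧸ (Ideal.span {(qmk (X ^ e) : PolyQuot k (e * p))} •
      (⊤ : Submodule (PolyQuot k (e * p)) ↥Fil))) →ₗ[PolyQuot k e] M :=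
    { toFun := F
      map_add' := by
        intro q1 q2
        show F (q1 + q2) = F q1 + F q2
        obtain ⟨a, rfl⟩ := Submodule.Quotient.mk_surjective _ q1
        obtain ⟨b, rfl⟩ := Submodule.Quotient.mk_surjective _ q2
        rw [← Submodule.Quotient.mk_add, hFmk, hFmk, hFmk, map_add]
      map_smul' := by
        intro t q
        obtain ⟨g, rfl⟩ := Ideal.Quotient.mk_surjective t
        obtain ⟨x, rfl⟩ := Submodule.Quotient.mk_surjective _ q
        rw [hTQ g, ← Submodule.Quotient.mk_smul]
        show F (Submodule.Quotient.mk ((qmk g : PolyQuot k (e * p)) • x))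
          = (RingHom.id (PolyQuot k e)) (Ideal.Quotient.mk _ g) • F (Submodule.Quotient.mk x)
        rw [hFmk, hFmk, hsemi, RingHom.id_apply, ← map_pow, ← halg]
        rfl } with hf
  have hfmk : ∀ x : ↥Fil, f (Submodule.Quotient.mk x) = φr x := fun _ => rfl
  refine ⟨f.liftBaseChange (PolyQuot k (e * p)), fun s x => ?_, ?_, ?_⟩
  · rw [LinearMap.liftBaseChange_tmul, hfmk]
  · -- injectivity
    haveI : Module.Finite (PolyQuot k (e * p)) M := Module.Finite.of_basis bM
    set Φ := f.liftBaseChange (PolyQuot k (e * p)) with hΦ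
    have hΦsurj : Function.Surjective Φ := by
      rw [← LinearMap.range_eq_top, hΦ, LinearMap.range_liftBaseChange, ← top_le_iff, ← hgen]
      refine Submodule.span_mono ?_
      rintro _ ⟨x, rfl⟩
      exact ⟨Submodule.Quotient.mk x, rfl⟩
    set bS := bQ.baseChange (PolyQuot k (e * p)) with hbS
    set ε := bM.equiv bS (Equiv.refl _) with hε
    have hsurj2 : Function.Surjective (Φ ∘ₗ ε.toLinearMap) :=
      hΦsurj.comp ε.surjective
    have hinj2 := OrzechProperty.injective_of_surjective_endomorphism
      (Φ ∘ₗ ε.toLinearMap) hsurj2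
    intro a b hab
    have h2 : (Φ ∘ₗ ε.toLinearMap) (ε.symm a) = (Φ ∘ₗ ε.toLinearMap) (ε.symm b) := by
      simpa [LinearMap.comp_apply] using hab
    exact ε.symm.injective (hinj2 h2)
  · -- surjectivity
    rw [← LinearMap.range_eq_top, LinearMap.range_liftBaseChange, ← top_le_iff, ← hgen]
    refine Submodule.span_mono ?_
    rintro _ ⟨x, rfl⟩
    exact ⟨Submodule.Quotient.mk x, rfl⟩
end

section
/- Let O and O′ be discrete valuation rings and let O → O′ be an injective local ring homomorphism (so m_O maps into m_{O′}) making O′ a finite free O-module. Let A be a commutative local O-algebra such that the structure map O → A induces an isomorphism O/m_O ≅ A/m_A on residue fields. Let M be a finite free O-module equipped with an A-module structure by O-linear endomorphisms such that the induced map A → End_O(M) is injective (A acts faithfully on M). If M ⊗_O O′ is free as an (A ⊗_O O′)-module, then M is free as an A-module. -/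
open TensorProduct

set_option maxHeartbeats 2000000

/-- Lemma 5.1.2. Let `O → O′` be an injective local homomorphism of
discrete valuation rings making `O′` finite free over `O`, and let `A` be a commutative
local `O`-algebra whose structure map induces an isomorphism on residue fields.  If `A`
acts faithfully by `O`-linear endomorphisms on a finite free `O`-module `M`, and
`M ⊗_O O′` is free over `A ⊗_O O′`, then `M` is free over `A`. -/
theorem stmt_11 {O O' A M : Type*}
    [CommRing O] [IsDomain O] [IsDiscreteValuationRing O]
    [CommRing O'] [IsDomain O'] [IsDiscreteValuationRing O']
    [Algebra O O'] (hinj : Function.Injective (algebraMap O O'))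
    [IsLocalHom (algebraMap O O')]
    [Module.Finite O O'] [Module.Free O O']
    [CommRing A] [Algebra O A] [IsLocalRing A]
    (hsurj : Function.Surjective ((IsLocalRing.residue A).comp (algebraMap O A)))
    (hker : RingHom.ker ((IsLocalRing.residue A).comp (algebraMap O A))
      = IsLocalRing.maximalIdeal O)
    [AddCommGroup M] [Module O M] [Module.Finite O M] [Module.Free O M]
    [Module A M] [IsScalarTower O A M] [SMulCommClass O A M]
    (hfaith : ∀ a : A, (∀ m : M, a • m = 0) → a = 0)
    [Module (TensorProduct O A O') (TensorProduct O M O')]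
    (hcompat : ∀ (a : A) (s t : O') (m : M),
      (a ⊗ₜ[O] s : TensorProduct O A O') • (m ⊗ₜ[O] t : TensorProduct O M O')
        = (a • m) ⊗ₜ[O] (s * t))
    (hfree : Module.Free (TensorProduct O A O') (TensorProduct O M O')) :
    Module.Free A M := by
  classical
  -- Step A : A is finite free over O
  let θ : A →ₗ[O] (M →ₗ[O] M) :=
    { toFun := fun a =>
        { toFun := fun m => a • m
          map_add' := fun m n => smul_add a m n
          map_smul' := fun o m => (smul_comm a o m : a • o • m = o • a • m).symm ▸ rfl }
      map_add' := fun a b => by ext m; exact add_smul a b m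
      map_smul' := fun o a => by ext m; exact smul_assoc o a m }
  have hθ : Function.Injective θ := by
    intro a b hab
    have h : ∀ m : M, (a - b) • m = 0 := by
      intro m
      have := congrArg (fun f => f m) hab
      simp only [θ, LinearMap.coe_mk, AddHom.coe_mk] at this
      rw [sub_smul]
      simpa [θ] using sub_eq_zero.mpr this
    have := hfaith _ h
    exact sub_eq_zero.mp this
  haveI : Module.Finite O A := Module.Finite.of_injective θ hθ
  haveI : NoZeroSMulDivisors O A := by
    constructor
    intro c a hca
    have : c • θ a = 0 := by rw [← map_smul, hca, map_zero]
    rcases smul_eq_zero.mp this with h | h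
    · exact Or.inl h
    · exact Or.inr (hθ (by rw [h, map_zero]))
  haveI : Module.Free O A := Module.free_of_finite_type_torsion_free'

  -- Step B : scalar structures on B := A ⊗[O] O' and on M ⊗[O] O'
  letI : Algebra O' (TensorProduct O A O') := Algebra.TensorProduct.rightAlgebra
  letI instMO' : Module O' (TensorProduct O M O') :=
    Module.compHom _ (algebraMap O' (TensorProduct O A O'))
  have halg : ∀ s : O', algebraMap O' (TensorProduct O A O') s = (1 : A) ⊗ₜ[O] s :=
    fun _ => rfl
  have hsmulO' : ∀ (s : O') (x : TensorProduct O M O'),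
      s • x = ((1 : A) ⊗ₜ[O] s : TensorProduct O A O') • x := fun _ _ => rfl
  have hsm : ∀ (s : O') (m : M) (t : O'),
      s • (m ⊗ₜ[O] t : TensorProduct O M O') = m ⊗ₜ[O] (s * t) := by
    intro s m t
    rw [hsmulO', hcompat, one_smul]
  haveI hTow1 : IsScalarTower O' (TensorProduct O A O') (TensorProduct O M O') := by
    refine ⟨fun x y z => ?_⟩
    show (algebraMap O' (TensorProduct O A O') x * y) • z
      = (algebraMap O' (TensorProduct O A O') x) • (y • z)
    rw [mul_smul]
  haveI hTow0 : IsScalarTower O (TensorProduct O A O') (TensorProduct O M O') := by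
    refine ⟨fun o b z => ?_⟩
    induction b with
    | zero => simp only [smul_zero, zero_smul]
    | tmul a s =>
      rw [TensorProduct.smul_tmul']
      induction z with
      | zero => simp only [smul_zero]
      | tmul m t =>
        rw [hcompat, hcompat, TensorProduct.smul_tmul', smul_assoc]
      | add z1 z2 h1 h2 => rw [smul_add, smul_add, h1, h2, smul_add]
    | add b1 b2 h1 h2 => rw [smul_add, add_smul, add_smul, h1, h2, smul_add]

  -- Step C : commutation equivalences and rank counting over O'
  have hcM : ∀ (s : O') (x : TensorProduct O O' M),
      (TensorProduct.comm O O' M) (s • x) = s • (TensorProduct.comm O O' M) x := by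
    intro s x
    induction x using TensorProduct.induction_on with
    | zero => simp only [map_zero, smul_zero]
    | tmul t m =>
      rw [TensorProduct.smul_tmul', TensorProduct.comm_tmul, TensorProduct.comm_tmul,
        hsm, smul_eq_mul]
    | add x y hx hy => rw [smul_add, map_add, map_add, hx, hy, smul_add]
  let eM : TensorProduct O O' M ≃ₗ[O'] TensorProduct O M O' :=
    { toFun := TensorProduct.comm O O' M
      map_add' := map_add _
      map_smul' := hcM
      invFun := (TensorProduct.comm O O' M).symm
      left_inv := fun x => (TensorProduct.comm O O' M).symm_apply_apply x
      right_inv := fun x => (TensorProduct.comm O O' M).apply_symm_apply x }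
  have hsmB : ∀ (s : O') (a : A) (t : O'),
      s • (a ⊗ₜ[O] t : TensorProduct O A O') = a ⊗ₜ[O] (s * t) := by
    intro s a t
    show ((1 : A) ⊗ₜ[O] s : TensorProduct O A O') * (a ⊗ₜ[O] t) = a ⊗ₜ[O] (s * t)
    rw [Algebra.TensorProduct.tmul_mul_tmul, one_mul]
  have hcA : ∀ (s : O') (x : TensorProduct O O' A),
      (TensorProduct.comm O O' A) (s • x) = s • (TensorProduct.comm O O' A) x := by
    intro s x
    induction x using TensorProduct.induction_on with
    | zero => simp only [map_zero, smul_zero]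
    | tmul t a =>
      rw [TensorProduct.smul_tmul', TensorProduct.comm_tmul, TensorProduct.comm_tmul,
        hsmB, smul_eq_mul]
    | add x y hx hy => rw [smul_add, map_add, map_add, hx, hy, smul_add]
  let eA : TensorProduct O O' A ≃ₗ[O'] TensorProduct O A O' :=
    { toFun := TensorProduct.comm O O' A
      map_add' := map_add _
      map_smul' := hcA
      invFun := (TensorProduct.comm O O' A).symm
      left_inv := fun x => (TensorProduct.comm O O' A).symm_apply_apply x
      right_inv := fun x => (TensorProduct.comm O O' A).apply_symm_apply x }
  let bM := Module.Free.chooseBasis O M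
  let bA := Module.Free.chooseBasis O A
  let bMO' : Module.Basis (Module.Free.ChooseBasisIndex O M) O' (TensorProduct O M O') :=
    (bM.baseChange O').map eM
  let bB : Module.Basis (Module.Free.ChooseBasisIndex O A) O' (TensorProduct O A O') :=
    (bA.baseChange O').map eA
  haveI := hfree
  haveI : Module.Finite (TensorProduct O A O') (TensorProduct O M O') :=
    Module.Finite.of_restrictScalars_finite O _ _
  let ξ := Module.Free.chooseBasis (TensorProduct O A O') (TensorProduct O M O')
  let big : Module.Basis _ O' (TensorProduct O M O') := bB.smulTower ξ
  have hrank : Fintype.card (Module.Free.ChooseBasisIndex O M)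
      = Fintype.card (Module.Free.ChooseBasisIndex O A)
        * Fintype.card (Module.Free.ChooseBasisIndex (TensorProduct O A O')
            (TensorProduct O M O')) := by
    have h1 := Module.finrank_eq_card_basis bMO'
    have h2 := Module.finrank_eq_card_basis big
    rw [h1, Fintype.card_prod] at h2
    exact h2

  -- Step D : minimal generators via Nakayama
  haveI : Module.Finite A M := Module.Finite.of_restrictScalars_finite O A M
  letI instkW : Module (IsLocalRing.ResidueField A)
      (M ⧸ (IsLocalRing.maximalIdeal A • ⊤ : Submodule A M)) :=
    inferInstanceAs (Module (A ⧸ IsLocalRing.maximalIdeal A) _)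
  haveI : IsScalarTower A (IsLocalRing.ResidueField A)
      (M ⧸ (IsLocalRing.maximalIdeal A • ⊤ : Submodule A M)) := by
    refine ⟨fun a x w => ?_⟩
    obtain ⟨b, rfl⟩ := IsLocalRing.residue_surjective (R := A) x
    obtain ⟨m, rfl⟩ := Submodule.Quotient.mk_surjective _ w
    show Submodule.Quotient.mk ((a * b) • m) = Submodule.Quotient.mk (a • b • m)
    rw [mul_smul]
  haveI : Module.Finite A (M ⧸ (IsLocalRing.maximalIdeal A • ⊤ : Submodule A M)) :=
    Module.Finite.of_surjective (Submodule.mkQ _) (Submodule.Quotient.mk_surjective _)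
  haveI : Module.Finite (IsLocalRing.ResidueField A)
      (M ⧸ (IsLocalRing.maximalIdeal A • ⊤ : Submodule A M)) :=
    Module.Finite.of_restrictScalars_finite A _ _
  let bW := Module.finBasis (IsLocalRing.ResidueField A)
      (M ⧸ (IsLocalRing.maximalIdeal A • ⊤ : Submodule A M))
  choose w hw using fun i => Submodule.Quotient.mk_surjective
      (IsLocalRing.maximalIdeal A • ⊤ : Submodule A M) (bW i)
  have hmk : ∀ (a : A) (y : M ⧸ (IsLocalRing.maximalIdeal A • ⊤ : Submodule A M)),
      a • y = (IsLocalRing.residue A a) • y := fun a y => rfl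
  have hsup : (⊤ : Submodule A M) ≤ Submodule.span A (Set.range w) ⊔
      (IsLocalRing.maximalIdeal A • ⊤ : Submodule A M) := by
    intro m _
    set π := Submodule.mkQ (IsLocalRing.maximalIdeal A • ⊤ : Submodule A M) with hπ
    choose coef hcoef using fun i => IsLocalRing.residue_surjective (R := A) (bW.repr (π m) i)
    have hmm : π (∑ i, coef i • w i) = π m := by
      rw [map_sum]
      have : ∀ i, π (coef i • w i) = bW.repr (π m) i • bW i := by
        intro i
        rw [map_smul, hπ]
        show coef i • Submodule.Quotient.mk (w i) = _
        rw [hmk, hcoef]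
        congr 1
        exact hw i
      rw [Finset.sum_congr rfl (fun i _ => this i)]
      exact bW.sum_repr (π m)
    have hsub : m - ∑ i, coef i • w i ∈
        (IsLocalRing.maximalIdeal A • ⊤ : Submodule A M) := by
      rw [← Submodule.Quotient.eq]
      exact hmm.symm
    have hm' : (∑ i, coef i • w i) ∈ Submodule.span A (Set.range w) :=
      Submodule.sum_mem _ (fun i _ => Submodule.smul_mem _ _
        (Submodule.subset_span ⟨i, rfl⟩))
    have : m = (∑ i, coef i • w i) + (m - ∑ i, coef i • w i) := by abel
    rw [this]
    exact Submodule.add_mem_sup hm' hsub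
  have hspan : Submodule.span A (Set.range w) = ⊤ := by
    refine le_antisymm le_top ?_
    refine Submodule.le_of_le_smul_of_le_jacobson_bot (Module.Finite.fg_top) ?_ hsup
    rw [IsLocalRing.jacobson_eq_maximalIdeal ⊥ bot_ne_top]

  -- Step E : d ≤ n via reduction to residue fields
  let res'' := IsLocalRing.residue O'
  let res' : O →+* IsLocalRing.ResidueField O' := res''.comp (algebraMap O O')
  let resO : O →+* IsLocalRing.ResidueField A := (IsLocalRing.residue A).comp (algebraMap O A)
  have hle : RingHom.ker resO ≤ RingHom.ker res' := by
    rw [show RingHom.ker resO = IsLocalRing.maximalIdeal O from hker]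
    intro x hx
    have hx' : ¬ IsUnit x := by simpa [IsLocalRing.mem_maximalIdeal, mem_nonunits_iff] using hx
    rw [RingHom.mem_ker]
    show IsLocalRing.residue O' (algebraMap O O' x) = 0
    have : algebraMap O O' x ∈ IsLocalRing.maximalIdeal O' := by
      rw [IsLocalRing.mem_maximalIdeal, mem_nonunits_iff]
      intro hu
      exact hx' (IsLocalHom.map_nonunit x hu)
    exact Ideal.Quotient.eq_zero_iff_mem.mpr this
  let kbar : IsLocalRing.ResidueField A →+* IsLocalRing.ResidueField O' :=
    (resO.liftOfSurjective hsurj) ⟨res', hle⟩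
  have hkbar : ∀ x : O, kbar (IsLocalRing.residue A (algebraMap O A x))
      = IsLocalRing.residue O' (algebraMap O O' x) := fun x =>
    resO.liftOfRightInverse_comp_apply _ _ ⟨res', hle⟩ x
  letI : Algebra O (IsLocalRing.ResidueField O') := res'.toAlgebra
  letI : Algebra (IsLocalRing.ResidueField A) (IsLocalRing.ResidueField O') := kbar.toAlgebra
  have hsmulkk' : ∀ (x : IsLocalRing.ResidueField A) (y : IsLocalRing.ResidueField O'),
      x • y = kbar x * y := fun x y => rfl
  let π := Submodule.mkQ (IsLocalRing.maximalIdeal A • ⊤ : Submodule A M)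
  have hπw : ∀ i, π (w i) = bW i := hw
  let βf : M →+ O' →+ (TensorProduct (IsLocalRing.ResidueField A)
      (IsLocalRing.ResidueField O')
      (M ⧸ (IsLocalRing.maximalIdeal A • ⊤ : Submodule A M))) :=
    AddMonoidHom.mk' (fun m => AddMonoidHom.mk' (fun s => res'' s ⊗ₜ π m)
      (fun s t => by
        rw [map_add, TensorProduct.add_tmul]))
      (fun m m' => by
        ext s
        show res'' s ⊗ₜ[IsLocalRing.ResidueField A] (π (m + m'))
          = res'' s ⊗ₜ[IsLocalRing.ResidueField A] (π m)
            + res'' s ⊗ₜ[IsLocalRing.ResidueField A] (π m')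
        rw [map_add, TensorProduct.tmul_add])
  have hbal : ∀ (o : O) (m : M) (s : O'), βf (o • m) s = βf m (o • s) := by
    intro o m s
    show res'' s ⊗ₜ[IsLocalRing.ResidueField A] (π (o • m))
      = res'' (o • s) ⊗ₜ[IsLocalRing.ResidueField A] (π m)
    rw [← algebraMap_smul A o m, map_smul, hmk, TensorProduct.tmul_smul,
      TensorProduct.smul_tmul', hsmulkk', hkbar, Algebra.smul_def, map_mul]
  let β := TensorProduct.liftAddHom βf hbal
  have hβ : ∀ (m : M) (t : O'), β (m ⊗ₜ[O] t) = res'' t ⊗ₜ π m := fun m t => rfl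
  letI : Algebra O (IsLocalRing.ResidueField O') := res'.toAlgebra
  let fA : A →ₐ[O] IsLocalRing.ResidueField O' :=
    { toRingHom := kbar.comp (IsLocalRing.residue A)
      commutes' := fun o => hkbar o }
  let fO' : O' →ₐ[O] IsLocalRing.ResidueField O' :=
    { toRingHom := res''
      commutes' := fun o => rfl }
  let χ : TensorProduct O A O' →ₐ[O] IsLocalRing.ResidueField O' :=
    Algebra.TensorProduct.productMap fA fO'
  have hβsemi : ∀ (c : TensorProduct O A O') (x : TensorProduct O M O'),
      β (c • x) = χ c • β x := by
    intro c x
    induction c using TensorProduct.induction_on with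
    | zero => rw [zero_smul, map_zero, map_zero, zero_smul]
    | tmul a s =>
      induction x using TensorProduct.induction_on with
      | zero => rw [smul_zero, map_zero, smul_zero]
      | tmul m t =>
        rw [hcompat, hβ, hβ]
        have h1 : π (a • m) = IsLocalRing.residue A a • π m := by
          rw [show π (a • m) = a • π m from map_smul π a m, hmk]
        rw [map_mul, h1, TensorProduct.tmul_smul, TensorProduct.smul_tmul',
          TensorProduct.smul_tmul', hsmulkk', smul_eq_mul,
          Algebra.TensorProduct.productMap_apply_tmul]
        congr 1
        show kbar (IsLocalRing.residue A a) * (res'' s * res'' t)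
          = kbar (IsLocalRing.residue A a) * res'' s * res'' t
        ring
      | add x1 x2 h1 h2 => rw [smul_add, map_add, h1, h2, map_add, smul_add]
    | add c1 c2 h1 h2 => rw [add_smul, map_add, h1, h2, map_add, add_smul]
  have hβsur : Function.Surjective β := by
    intro y
    induction y using TensorProduct.induction_on with
    | zero => exact ⟨0, map_zero β⟩
    | tmul lam v =>
      obtain ⟨s, rfl⟩ := IsLocalRing.residue_surjective (R := O') lam
      obtain ⟨m, rfl⟩ := Submodule.Quotient.mk_surjective _ v
      exact ⟨m ⊗ₜ s, hβ m s⟩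
    | add y1 y2 h1 h2 =>
      obtain ⟨x1, rfl⟩ := h1
      obtain ⟨x2, rfl⟩ := h2
      exact ⟨x1 + x2, map_add β x1 x2⟩
  have hdn : Module.finrank (IsLocalRing.ResidueField A)
      (M ⧸ (IsLocalRing.maximalIdeal A • ⊤ : Submodule A M))
      ≤ Fintype.card (Module.Free.ChooseBasisIndex (TensorProduct O A O')
          (TensorProduct O M O')) := by
    have hspan' : Submodule.span (IsLocalRing.ResidueField O')
        (Set.range (fun i => β (ξ i))) = ⊤ := by
      rw [Submodule.eq_top_iff']
      intro y
      obtain ⟨x, rfl⟩ := hβsur y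
      have hx : x = ∑ i, ξ.repr x i • ξ i := (ξ.sum_repr x).symm
      rw [hx, map_sum]
      refine Submodule.sum_mem _ (fun i _ => ?_)
      rw [hβsemi]
      exact Submodule.smul_mem _ _ (Submodule.subset_span ⟨i, rfl⟩)
    have h1 : Module.finrank (IsLocalRing.ResidueField O')
        (TensorProduct (IsLocalRing.ResidueField A) (IsLocalRing.ResidueField O')
          (M ⧸ (IsLocalRing.maximalIdeal A • ⊤ : Submodule A M)))
        = Module.finrank (IsLocalRing.ResidueField A)
          (M ⧸ (IsLocalRing.maximalIdeal A • ⊤ : Submodule A M)) :=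
      Module.finrank_baseChange
    have h2 := finrank_span_le_card (R := IsLocalRing.ResidueField O')
      (Set.range (fun i => β (ξ i)))
    rw [hspan', finrank_top] at h2
    have h3 : (Set.range (fun i => β (ξ i))).toFinset.card
        ≤ Fintype.card (Module.Free.ChooseBasisIndex (TensorProduct O A O')
            (TensorProduct O M O')) := by
      rw [Set.toFinset_range]
      exact (Finset.card_image_le).trans (le_of_eq (Finset.card_univ))
    rw [← h1]
    exact h2.trans h3

  -- Step F : conclusion
  haveI : Nontrivial A := inferInstance
  let f : (Fin (Module.finrank (IsLocalRing.ResidueField A)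
      (M ⧸ (IsLocalRing.maximalIdeal A • ⊤ : Submodule A M))) → A) →ₗ[A] M :=
    Fintype.linearCombination A w
  have hfsur : Function.Surjective f := by
    rw [← LinearMap.range_eq_top]
    show LinearMap.range (Fintype.linearCombination A w) = ⊤
    rw [Fintype.range_linearCombination]
    exact hspan
  let bP := Pi.basis (fun _ : Fin (Module.finrank (IsLocalRing.ResidueField A)
      (M ⧸ (IsLocalRing.maximalIdeal A • ⊤ : Submodule A M))) => bA)
  have hapos : 0 < Fintype.card (Module.Free.ChooseBasisIndex O A) :=
    Fintype.card_pos_iff.mpr bA.index_nonempty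
  have hnd : Fintype.card (Module.Free.ChooseBasisIndex (TensorProduct O A O')
        (TensorProduct O M O'))
      ≤ Module.finrank (IsLocalRing.ResidueField A)
        (M ⧸ (IsLocalRing.maximalIdeal A • ⊤ : Submodule A M)) := by
    let g1 := (bP.reindex (Fintype.equivFin _)).equivFun
    let g2 := (bM.reindex (Fintype.equivFin _)).equivFun
    have hs : Function.Surjective
        (g2.toLinearMap ∘ₗ (f.restrictScalars O) ∘ₗ g1.symm.toLinearMap) := by
      intro y
      obtain ⟨x, hx⟩ := hfsur (g2.symm y)
      refine ⟨g1 x, ?_⟩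
      show g2 ((f.restrictScalars O) (g1.symm (g1 x))) = y
      rw [g1.symm_apply_apply]
      show g2 (f x) = y
      rw [hx, g2.apply_symm_apply]
    have hle2 := le_of_fin_surjective (R := O) _ hs
    have hle3 : Fintype.card (Module.Free.ChooseBasisIndex O M)
        ≤ Module.finrank (IsLocalRing.ResidueField A)
            (M ⧸ (IsLocalRing.maximalIdeal A • ⊤ : Submodule A M))
          * Fintype.card (Module.Free.ChooseBasisIndex O A) :=
      le_trans hle2 (le_of_eq (by simp [Fintype.card_sigma, Finset.sum_const, smul_eq_mul]))
    rw [hrank] at hle3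
    rw [mul_comm (Fintype.card (Module.Free.ChooseBasisIndex O A))] at hle3
    exact Nat.le_of_mul_le_mul_right hle3 hapos
  have hdn' : Module.finrank (IsLocalRing.ResidueField A)
        (M ⧸ (IsLocalRing.maximalIdeal A • ⊤ : Submodule A M))
      = Fintype.card (Module.Free.ChooseBasisIndex (TensorProduct O A O')
          (TensorProduct O M O')) := le_antisymm hdn hnd
  have hcards : Fintype.card ((_ : Fin (Module.finrank (IsLocalRing.ResidueField A)
        (M ⧸ (IsLocalRing.maximalIdeal A • ⊤ : Submodule A M)))) ×
          Module.Free.ChooseBasisIndex O A)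
      = Fintype.card (Module.Free.ChooseBasisIndex O M) := by
    simp only [Fintype.card_sigma, Finset.sum_const, smul_eq_mul, Finset.card_univ,
      Fintype.card_fin]
    rw [hrank, hdn']
    ring
  let e3 := bP.equiv bM (Fintype.equivOfCardEq hcards)
  haveI : IsNoetherian O (Fin (Module.finrank (IsLocalRing.ResidueField A)
      (M ⧸ (IsLocalRing.maximalIdeal A • ⊤ : Submodule A M))) → A) :=
    isNoetherian_of_isNoetherianRing_of_finite O _
  let endo := e3.symm.toLinearMap ∘ₗ (f.restrictScalars O)
  have hendo : Function.Surjective endo := e3.symm.surjective.comp hfsur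
  have hinj2 : Function.Injective endo :=
    IsNoetherian.injective_of_surjective_endomorphism endo hendo
  have hfinj : Function.Injective f := fun x y hxy =>
    hinj2 (show endo x = endo y from congrArg e3.symm hxy)
  exact Module.Free.of_equiv (LinearEquiv.ofBijective f ⟨hfinj, hfsur⟩)
end

section
/- Let p be a prime and let k, m be integers with 1 ≤ k ≤ p − 2 and 0 ≤ m ≤ p − 1. Then in F_p = ℤ/pℤ one has Σ_{z ∈ F_p, z ≠ 0} (z + 1)^{m} · z^{p−1−k} = −binom(m, k), where binom(m, k) denotes the binomial coefficient reduced modulo p (equal to 0 when k > m). -/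
open Finset

lemma units_sum_eq (p : ℕ) [Fact p.Prime] (f : ZMod p → ZMod p) :
    ∑ z ∈ Finset.univ.filter (fun z : ZMod p => z ≠ 0), f z = ∑ u : (ZMod p)ˣ, f u := by
  classical
  let φ : (ZMod p)ˣ ↪ ZMod p := ⟨fun x ↦ x, fun _ _ h => Units.ext h⟩
  have h : (univ : Finset (ZMod p)ˣ).map φ = univ.filter (fun z : ZMod p => z ≠ 0) := by
    ext x
    simpa only [mem_map, mem_univ, Function.Embedding.coeFn_mk, true_and, mem_filter,
      φ] using (have h' : (∃ a, φ a = x) ↔ x ≠ 0 := isUnit_iff_ne_zero; h')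
  rw [← h, Finset.sum_map]
  rfl

lemma zmod_sum_pow (p : ℕ) [Fact p.Prime] (i : ℕ) :
    ∑ u : (ZMod p)ˣ, (u : ZMod p) ^ i = if (p - 1) ∣ i then -1 else 0 := by
  classical
  have := FiniteField.sum_pow_units (ZMod p) i
  rwa [ZMod.card] at this

/-- For a prime `p`, `1 ≤ k ≤ p − 2` and `0 ≤ m ≤ p − 1`, in `𝔽_p` one has
`Σ_{z ≠ 0} (z + 1)^m z^{p−1−k} = −C(m, k)` (binomial coefficient mod `p`). -/
theorem stmt_12 (p : ℕ) [Fact p.Prime] (k m : ℕ)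
    (hk1 : 1 ≤ k) (hk2 : k ≤ p - 2) (hm : m ≤ p - 1) :
    ∑ z ∈ Finset.univ.filter (fun z : ZMod p => z ≠ 0), (z + 1) ^ m * z ^ (p - 1 - k)
      = -(Nat.choose m k : ZMod p) := by
  classical
  have hp : p.Prime := Fact.out
  have hp2 : 2 ≤ p := hp.two_le
  rw [units_sum_eq p (fun z => (z + 1) ^ m * z ^ (p - 1 - k))]
  have expand : ∀ z : ZMod p, (z + 1) ^ m * z ^ (p - 1 - k)
      = ∑ i ∈ Finset.range (m + 1), (m.choose i : ZMod p) * z ^ (i + (p - 1 - k)) := by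
    intro z
    rw [add_pow, Finset.sum_mul]
    apply Finset.sum_congr rfl
    intro i _
    rw [pow_add]
    ring
  simp only [expand]
  rw [Finset.sum_comm]
  have inner : ∀ i ∈ Finset.range (m + 1),
      ∑ u : (ZMod p)ˣ, (m.choose i : ZMod p) * (u : ZMod p) ^ (i + (p - 1 - k))
        = if i = k then -(m.choose k : ZMod p) else 0 := by
    intro i hi
    rw [← Finset.mul_sum, zmod_sum_pow]
    rw [Finset.mem_range] at hi
    by_cases hik : i = k
    · subst hik
      rw [if_pos, if_pos rfl]
      · ring
      · have : i + (p - 1 - i) = p - 1 := by omega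
        rw [this]
    · rw [if_neg, if_neg hik, mul_zero]
      intro hdvd
      have h2 : 0 < i + (p - 1 - k) := by omega
      have hle := Nat.le_of_dvd h2 hdvd
      have hx : i + (p - 1 - k) = p - 1 := by
        by_contra hne
        have hd2 : (p - 1) ∣ (i + (p - 1 - k) - (p - 1)) := Nat.dvd_sub hdvd dvd_rfl
        have := Nat.le_of_dvd (by omega) hd2
        omega
      exact hik (by omega)
  rw [Finset.sum_congr rfl inner]
  by_cases hkm : k ≤ m
  · rw [Finset.sum_ite_eq' (Finset.range (m+1)) k, if_pos (Finset.mem_range.mpr (by omega))]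
  · rw [Nat.choose_eq_zero_of_lt (by omega)]
    simp only [Nat.cast_zero, neg_zero]
    apply Finset.sum_eq_zero
    intro i hi
    rw [Finset.mem_range] at hi
    rw [if_neg (by omega)]
end

section
/- Let p be a prime and let F be a field of characteristic p. Let a₀, a₁, a₂ be integers with a₁ − a₀ > 2, a₂ − a₁ > 2, and a₂ − a₀ < p − 3. Let G := GL₃(F_p), let B ⊆ G be the subgroup of upper-triangular invertible matrices, set ṡ₁ := [[0,1,0],[1,0,0],[0,0,1]], ẇ₀ := [[0,0,1],[0,1,0],[1,0,0]], u(x,y,z) := [[1,x,y],[0,1,z],[0,0,1]] for x,y,z ∈ F_p, and g₀ := [[0,0,1],[0,1,−1],[1,−1,0]]. Let f : G → F be a function satisfying: (i) f(g) = 0 unless g ∈ B·ṡ₁·B; (ii) f(ṡ₁·u) = f(ṡ₁) for every upper-triangular unipotent u ∈ G; (iii) f(b·g) = b₁₁^{a₂}·b₂₂^{a₁}·b₃₃^{a₀}·f(g) for all b ∈ B and g ∈ G (integer powers of the units bᵢᵢ ∈ F_pˣ, viewed in F). Then Σ_{x,y,z ∈ F_p} x^{p−(a₂−a₀)} · z^{p−(a₁−a₀)}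 · f(g₀ · u(x,y,z) · ẇ₀) = (−1)^{a₂−1} · binom(p−(a₁−a₀), a₂−a₁) · f(ṡ₁) in F. In particular, since 0 < a₂ − a₁ ≤ p − (a₁ − a₀) ≤ p − 1, the binomial coefficient is nonzero in F, so the left-hand side is nonzero whenever f(ṡ₁) ≠ 0. -/
open Matrix Finset

section Helpers

lemma sum_pow_zmod (p : ℕ) [Fact p.Prime] (n : ℕ) (hn : n ≠ 0) :
    (∑ x : ZMod p, x ^ n) = if (p - 1) ∣ n then -1 else 0 := by
  classical
  have h := FiniteField.sum_pow_units (ZMod p) n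
  rw [ZMod.card] at h
  rw [← h]
  let φ : (ZMod p)ˣ ↪ ZMod p := ⟨fun x ↦ x, Units.val_injective⟩
  have huniv : univ.map φ = univ \ {0} := by
    ext x
    simpa only [mem_map, mem_univ, Function.Embedding.coeFn_mk, true_and, mem_sdiff,
      mem_singleton, φ] using (show (∃ a : (ZMod p)ˣ, ↑a = x) ↔ ¬x = 0 from isUnit_iff_ne_zero)
  calc
    ∑ x : ZMod p, x ^ n = ∑ x ∈ univ \ {(0 : ZMod p)}, x ^ n := by
      rw [← sum_sdiff ({0} : Finset (ZMod p)).subset_univ, sum_singleton, zero_pow hn, add_zero]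
    _ = ∑ x : (ZMod p)ˣ, (x : ZMod p) ^ n := by
      rw [← huniv, Finset.sum_map]; rfl

lemma sum_main_zmod (p d1 d2 : ℕ) [Fact p.Prime] (h1 : 3 ≤ d1) (h2 : 3 ≤ d2)
    (h12 : d1 + d2 + 4 ≤ p) :
    ∑ y : ZMod p, y ^ (p - d1) * (y - 1) ^ (p - 1 - d2)
      = (-1 : ZMod p) ^ ((p - d1 - d2) + 1) * Nat.choose (p - 1 - d2) (d1 - 1) := by
  classical
  set N₁ := p - d1 with hN₁
  set K := p - 1 - d2 with hK
  have huniq : ∀ j ≤ K, (p - 1) ∣ (N₁ + j) → j = d1 - 1 := by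
    intro j hj hdvd
    obtain ⟨c, hc⟩ := hdvd
    match c with
    | 0 => omega
    | 1 => omega
    | (n+2) =>
      have : (p-1) * 2 ≤ (p-1) * (n+2) := Nat.mul_le_mul_left _ (by omega)
      omega
  calc ∑ y : ZMod p, y ^ N₁ * (y - 1) ^ K
      = ∑ y : ZMod p, ∑ j ∈ range (K+1), y ^ (N₁ + j) * ((-1)^(K-j) * (K.choose j : ZMod p)) := by
        refine Finset.sum_congr rfl fun y _ => ?_
        rw [sub_eq_add_neg, add_pow, Finset.mul_sum]
        refine Finset.sum_congr rfl fun j hj => ?_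
        rw [pow_add]; ring
    _ = ∑ j ∈ range (K+1), ((-1:ZMod p)^(K-j) * (K.choose j : ZMod p)) * ∑ y : ZMod p, y ^ (N₁ + j) := by
        rw [Finset.sum_comm]
        refine Finset.sum_congr rfl fun j _ => ?_
        rw [Finset.mul_sum]
        exact Finset.sum_congr rfl fun y _ => (mul_comm _ _)
    _ = ∑ j ∈ range (K+1), ((-1:ZMod p)^(K-j) * (K.choose j : ZMod p)) *
          (if (p-1) ∣ (N₁+j) then -1 else 0) := by
        refine Finset.sum_congr rfl fun j _ => ?_
        rw [sum_pow_zmod p _ (by omega)]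
    _ = ((-1:ZMod p)^(K-(d1-1)) * (K.choose (d1-1) : ZMod p)) * (-1) := by
        rw [Finset.sum_eq_single (d1-1)]
        · rw [if_pos ⟨1, by omega⟩]
        · intro j hj hne
          rw [if_neg, mul_zero]
          intro hdvd
          exact hne (huniq j (Nat.lt_succ_iff.mp (mem_range.mp hj)) hdvd)
        · intro h; exact absurd (mem_range.mpr (by omega)) h
    _ = (-1 : ZMod p) ^ ((p - d1 - d2) + 1) * Nat.choose K (d1 - 1) := by
        have h' : K - (d1-1) = p - d1 - d2 := by omega
        rw [h', pow_succ]; ring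

lemma fact_fact_zmod (p : ℕ) [hp : Fact p.Prime] :
    ∀ m : ℕ, m < p → ((p - 1 - m).factorial * m.factorial : ZMod p) = (-1) ^ (m + 1) := by
  intro m
  induction m with
  | zero => intro _; simp [ZMod.wilsons_lemma]
  | succ k ih =>
    intro hk
    have ihh := ih (by omega)
    have h1 : p - 1 - k = (p - 1 - (k + 1)) + 1 := by
      have := hp.out.two_le; omega
    have hsum : ((p - 1 - k : ℕ) : ZMod p) + ((k+1 : ℕ) : ZMod p) = 0 := by
      rw [← Nat.cast_add]
      have e : (p - 1 - k) + (k + 1) = p := by have := hp.out.two_le; omega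
      rw [e, ZMod.natCast_self]
    have h2 : (((p - 1 - (k+1)) + 1 : ℕ) : ZMod p) = -((k+1 : ℕ) : ZMod p) := by
      rw [← h1]; linear_combination hsum
    rw [h1, Nat.factorial_succ, Nat.cast_mul, h2] at ihh
    have key : ((k+1:ℕ) : ZMod p) * ((p - 1 - (k+1)).factorial : ZMod p) *
        (k.factorial : ZMod p) = (-1)^(k+2) := by
      rw [pow_succ]; linear_combination -ihh
    rw [Nat.factorial_succ, Nat.cast_mul]
    linear_combination key

lemma choose_flip_zmod (p d1 d2 : ℕ) [hp : Fact p.Prime] (h1 : 3 ≤ d1) (h2 : 3 ≤ d2)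
    (h12 : d1 + d2 + 4 ≤ p) :
    (-1 : ZMod p) ^ (p - d1 - d2) * (Nat.choose (p - 1 - d2) (d1 - 1) : ZMod p)
      = (Nat.choose (p - d1) d2 : ZMod p) := by
  have hfne : ∀ m : ℕ, m < p → ((m.factorial : ZMod p)) ≠ 0 := by
    intro m hm h0
    rw [ZMod.natCast_eq_zero_iff] at h0
    exact absurd ((Nat.Prime.dvd_factorial hp.out).mp h0) (by omega)
  have e1 : ((Nat.choose (p-1-d2) (d1-1) : ZMod p) * (d1-1).factorial * (p-d1-d2).factorial : ZMod p)
      = ((p-1-d2).factorial : ZMod p) := by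
    have h := Nat.choose_mul_factorial_mul_factorial (show d1-1 ≤ p-1-d2 by omega)
    have hKj : (p-1-d2) - (d1-1) = p-d1-d2 := by omega
    rw [hKj] at h
    exact_mod_cast congrArg (Nat.cast : ℕ → ZMod p) h
  have e2 : ((Nat.choose (p-d1) d2 : ZMod p) * d2.factorial * (p-d1-d2).factorial : ZMod p)
      = ((p-d1).factorial : ZMod p) := by
    have h := Nat.choose_mul_factorial_mul_factorial (show d2 ≤ p-d1 by omega)
    have hKj : (p-d1) - d2 = p-d1-d2 := by omega
    rw [hKj] at h
    exact_mod_cast congrArg (Nat.cast : ℕ → ZMod p) h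
  have w1 : ((p-1-d2).factorial * d2.factorial : ZMod p) = (-1)^(d2+1) :=
    fact_fact_zmod p d2 (by omega)
  have w2 : ((p-d1).factorial * (d1-1).factorial : ZMod p) = (-1)^d1 := by
    have h := fact_fact_zmod p (d1-1) (by omega)
    have e : p - 1 - (d1-1) = p - d1 := by omega
    have e' : (d1 - 1) + 1 = d1 := by omega
    rw [e, e'] at h
    exact h
  have hodd : Odd p := hp.out.odd_of_ne_two (by omega)
  have hpar : (-1 : ZMod p) ^ (p - d1 - d2) * (-1)^(d2+1) = (-1)^d1 := by
    have hsq : (-1 : ZMod p)^d1 * (-1)^d1 = 1 := by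
      rw [← pow_add]; exact Even.neg_one_pow ⟨d1, by omega⟩
    calc (-1 : ZMod p) ^ (p - d1 - d2) * (-1)^(d2+1)
        = (-1 : ZMod p) ^ (p - d1 - d2) * (-1)^(d2+1) * ((-1)^d1 * (-1)^d1) := by
          rw [hsq, mul_one]
      _ = ((-1 : ZMod p) ^ ((p - d1 - d2) + (d2+1) + d1)) * (-1)^d1 := by
          rw [pow_add, pow_add]; ring
      _ = (-1)^d1 := by
          have e : (p - d1 - d2) + (d2+1) + d1 = p + 1 := by omega
          rw [e, Even.neg_one_pow hodd.add_one, one_mul]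
  have hne : ((d1-1).factorial : ZMod p) * (d2.factorial : ZMod p) *
      ((p-d1-d2).factorial : ZMod p) ≠ 0 :=
    mul_ne_zero (mul_ne_zero (hfne _ (by omega)) (hfne _ (by omega))) (hfne _ (by omega))
  apply mul_right_cancel₀ hne
  calc (-1 : ZMod p) ^ (p - d1 - d2) * (Nat.choose (p - 1 - d2) (d1 - 1) : ZMod p) *
        ((d1-1).factorial * (d2.factorial : ZMod p) * ((p-d1-d2).factorial : ZMod p))
      = (-1 : ZMod p) ^ (p - d1 - d2) *
        ((Nat.choose (p-1-d2) (d1-1) : ZMod p) * (d1-1).factorial * (p-d1-d2).factorial) *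
        d2.factorial := by ring
    _ = (-1 : ZMod p) ^ (p - d1 - d2) * ((p-1-d2).factorial * d2.factorial) := by
        rw [e1]; ring
    _ = (-1)^d1 := by rw [w1]; exact hpar
    _ = ((p-d1).factorial * (d1-1).factorial : ZMod p) := w2.symm
    _ = ((Nat.choose (p-d1) d2 : ZMod p) * d2.factorial * (p-d1-d2).factorial) * (d1-1).factorial := by
        rw [e2]
    _ = (Nat.choose (p - d1) d2 : ZMod p) *
        ((d1-1).factorial * (d2.factorial : ZMod p) * ((p-d1-d2).factorial : ZMod p)) := by ring

end Helpers
/-- the computation proving Lemma 3.1.7. Let `f : GL₃(𝔽_p) → F` be an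
Iwahori eigenfunction of eigencharacter `(a₂, a₁, a₀)` supported on the Bruhat cell
`B·ṡ₁·B` and right-invariant under the upper unipotent subgroup at `ṡ₁`.  Then the value
at `g₀` of `S·f`, for the group-algebra operator
`S = Σ_{x,y,z} x^{p−(a₂−a₀)} z^{p−(a₁−a₀)} u(x,y,z) ẇ₀`, equals
`(−1)^{a₂−1}·C(p−(a₁−a₀), a₂−a₁)·f(ṡ₁)`; in particular it is nonzero if `f(ṡ₁) ≠ 0`. -/
theorem stmt_13 (p : ℕ) [Fact p.Prime] {F : Type*} [Field F] [CharP F p]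
    (a₀ a₁ a₂ : ℤ) (h10 : 2 < a₁ - a₀) (h21 : 2 < a₂ - a₁) (h20 : a₂ - a₀ < (p : ℤ) - 3)
    (s₁ w₀ g₀ : GL (Fin 3) (ZMod p))
    (hs₁ : (s₁ : Matrix (Fin 3) (Fin 3) (ZMod p)) = !![0, 1, 0; 1, 0, 0; 0, 0, 1])
    (hw₀ : (w₀ : Matrix (Fin 3) (Fin 3) (ZMod p)) = !![0, 0, 1; 0, 1, 0; 1, 0, 0])
    (hg₀ : (g₀ : Matrix (Fin 3) (Fin 3) (ZMod p)) = !![0, 0, 1; 0, 1, -1; 1, -1, 0])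
    (u : ZMod p → ZMod p → ZMod p → GL (Fin 3) (ZMod p))
    (hu : ∀ x y z : ZMod p,
      (u x y z : Matrix (Fin 3) (Fin 3) (ZMod p)) = !![1, x, y; 0, 1, z; 0, 0, 1])
    (f : GL (Fin 3) (ZMod p) → F)
    (hsupp : ∀ g : GL (Fin 3) (ZMod p),
      (¬ ∃ b₁ b₂ : GL (Fin 3) (ZMod p),
        (∀ i j : Fin 3, j < i → (b₁ : Matrix (Fin 3) (Fin 3) (ZMod p)) i j = 0) ∧
        (∀ i j : Fin 3, j < i → (b₂ : Matrix (Fin 3) (Fin 3) (ZMod p)) i j = 0) ∧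
        g = b₁ * s₁ * b₂) → f g = 0)
    (hinv : ∀ x y z : ZMod p, f (s₁ * u x y z) = f s₁)
    (hequiv : ∀ b g : GL (Fin 3) (ZMod p),
      (∀ i j : Fin 3, j < i → (b : Matrix (Fin 3) (Fin 3) (ZMod p)) i j = 0) →
      f (b * g) = ZMod.castHom (dvd_refl p) F
          ((b : Matrix (Fin 3) (Fin 3) (ZMod p)) 0 0 ^ a₂ *
            (b : Matrix (Fin 3) (Fin 3) (ZMod p)) 1 1 ^ a₁ *
            (b : Matrix (Fin 3) (Fin 3) (ZMod p)) 2 2 ^ a₀) * f g) :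
    (∑ x : ZMod p, ∑ y : ZMod p, ∑ z : ZMod p,
        ZMod.castHom (dvd_refl p) F
            (x ^ ((p : ℤ) - (a₂ - a₀)) * z ^ ((p : ℤ) - (a₁ - a₀))) *
          f (g₀ * u x y z * w₀))
      = (-1 : F) ^ (a₂ - 1) *
          (Nat.choose ((p : ℤ) - (a₁ - a₀)).toNat (a₂ - a₁).toNat : F) * f s₁ ∧
    (f s₁ ≠ 0 →
      (∑ x : ZMod p, ∑ y : ZMod p, ∑ z : ZMod p,
          ZMod.castHom (dvd_refl p) F
              (x ^ ((p : ℤ) - (a₂ - a₀)) * z ^ ((p : ℤ) - (a₁ - a₀))) *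
            f (g₀ * u x y z * w₀)) ≠ 0) := by
  classical
  have hp := (inferInstance : Fact p.Prime).out
  obtain ⟨d1, hd1⟩ : ∃ d1 : ℕ, (d1 : ℤ) = a₁ - a₀ :=
    ⟨(a₁ - a₀).toNat, Int.toNat_of_nonneg (by omega)⟩
  obtain ⟨d2, hd2⟩ : ∃ d2 : ℕ, (d2 : ℤ) = a₂ - a₁ :=
    ⟨(a₂ - a₁).toNat, Int.toNat_of_nonneg (by omega)⟩
  have hd1_3 : 3 ≤ d1 := by omega
  have hd2_3 : 3 ≤ d2 := by omega
  have h12p : d1 + d2 + 4 ≤ p := by omega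
  -- the coercion of the products
  have hM : ∀ x y z : ZMod p, ((g₀ * u x y z * w₀ : GL (Fin 3) (ZMod p)) :
      Matrix (Fin 3) (Fin 3) (ZMod p)) = !![1, 0, 0; z - 1, 1, 0; y - z, x - 1, 1] := by
    intro x y z
    rw [Units.val_mul, Units.val_mul, hg₀, hu, hw₀]
    ext i j
    fin_cases i <;> fin_cases j <;> simp [Matrix.mul_apply, Fin.sum_univ_succ] <;> ring
  -- diagonal entries of upper-triangular GL elements are nonzero
  have hdiag : ∀ b : GL (Fin 3) (ZMod p),
      (∀ i j : Fin 3, j < i → (b : Matrix (Fin 3) (Fin 3) (ZMod p)) i j = 0) →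
      (b : Matrix (Fin 3) (Fin 3) (ZMod p)) 0 0 ≠ 0 ∧
      (b : Matrix (Fin 3) (Fin 3) (ZMod p)) 1 1 ≠ 0 := by
    intro b h
    set B : Matrix (Fin 3) (Fin 3) (ZMod p) := (b : Matrix (Fin 3) (Fin 3) (ZMod p)) with hB
    have hdet : IsUnit B.det := (Matrix.isUnit_iff_isUnit_det _).mp b.isUnit
    have hd : B.det = B 0 0 * (B 1 1 * B 2 2) := by
      rw [Matrix.det_fin_three, h 1 0 (by decide), h 2 0 (by decide), h 2 1 (by decide)]
      ring
    rw [hd] at hdet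
    have hne := hdet.ne_zero
    exact ⟨left_ne_zero_of_mul hne, left_ne_zero_of_mul (right_ne_zero_of_mul hne)⟩
  -- vanishing outside the cell
  have hvanish : ∀ x y z : ZMod p, ¬(x = 1 ∧ y = z ∧ z ≠ 1) →
      f (g₀ * u x y z * w₀) = 0 := by
    intro x y z hcond
    apply hsupp
    rintro ⟨b₁, b₂, hb₁, hb₂, heq⟩
    apply hcond
    have hmat : (!![1, 0, 0; z - 1, 1, 0; y - z, x - 1, 1] : Matrix (Fin 3) (Fin 3) (ZMod p))
        = (b₁ : Matrix (Fin 3) (Fin 3) (ZMod p)) * !![0, 1, 0; 1, 0, 0; 0, 0, 1] *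
          (b₂ : Matrix (Fin 3) (Fin 3) (ZMod p)) := by
      rw [← hs₁, ← Units.val_mul, ← Units.val_mul, ← heq, hM]
    set B₁ : Matrix (Fin 3) (Fin 3) (ZMod p) := (b₁ : Matrix (Fin 3) (Fin 3) (ZMod p)) with hB₁
    set B₂ : Matrix (Fin 3) (Fin 3) (ZMod p) := (b₂ : Matrix (Fin 3) (Fin 3) (ZMod p)) with hB₂
    have e10 : B₁ 1 0 = 0 := hb₁ 1 0 (by decide)
    have e20 : B₁ 2 0 = 0 := hb₁ 2 0 (by decide)
    have e21 : B₁ 2 1 = 0 := hb₁ 2 1 (by decide)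
    have f10 : B₂ 1 0 = 0 := hb₂ 1 0 (by decide)
    have f20 : B₂ 2 0 = 0 := hb₂ 2 0 (by decide)
    have f21 : B₂ 2 1 = 0 := hb₂ 2 1 (by decide)
    have c20 := congrFun (congrFun hmat 2) 0
    have c21 := congrFun (congrFun hmat 2) 1
    have c10 := congrFun (congrFun hmat 1) 0
    simp [Matrix.mul_apply, Fin.sum_univ_succ, e10, e20, e21, f10, f20, f21] at c20 c21 c10
    refine ⟨by linear_combination c21, by linear_combination c20, ?_⟩
    intro hz1
    rw [hz1, sub_self] at c10
    exact (mul_ne_zero (hdiag b₁ hb₁).2 (hdiag b₂ hb₂).1) c10.symm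
  -- value on the cell
  have hgood : ∀ z : ZMod p, z ≠ 1 →
      f (g₀ * u 1 z z * w₀) = ZMod.castHom (dvd_refl p) F
        ((-(z - 1)⁻¹) ^ a₂ * (z - 1) ^ a₁ * (1 : ZMod p) ^ a₀) * f s₁ := by
    intro z hz
    set α : ZMod p := z - 1 with hαdef
    have hα : α ≠ 0 := sub_ne_zero.mpr hz
    have hdet : (!![-α⁻¹, 1, 0; 0, α, 0; 0, 0, 1] : Matrix (Fin 3) (Fin 3) (ZMod p)).det = -1 := by
      rw [Matrix.det_fin_three]
      norm_num [Matrix.cons_val_two, Matrix.vecHead, Matrix.vecTail]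
      field_simp
    have hA : IsUnit (!![-α⁻¹, 1, 0; 0, α, 0; 0, 0, 1] : Matrix (Fin 3) (Fin 3) (ZMod p)) := by
      rw [Matrix.isUnit_iff_isUnit_det, hdet]
      exact isUnit_one.neg
    have hb₁spec : (hA.unit : Matrix (Fin 3) (Fin 3) (ZMod p)) = !![-α⁻¹, 1, 0; 0, α, 0; 0, 0, 1] :=
      hA.unit_spec
    have heq : g₀ * u 1 z z * w₀ = hA.unit * s₁ * u α⁻¹ 0 0 := by
      ext1
      rw [hM, Units.val_mul, Units.val_mul, hb₁spec, hs₁, hu]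
      ext i j
      fin_cases i <;> fin_cases j <;> simp [Matrix.mul_apply, Fin.sum_univ_succ] <;> field_simp <;> rfl
    have htri : ∀ i j : Fin 3, j < i → (hA.unit : Matrix (Fin 3) (Fin 3) (ZMod p)) i j = 0 := by
      intro i j hij
      rw [hb₁spec]
      fin_cases i <;> fin_cases j <;> first
        | exact absurd hij (by decide)
        | simp [Matrix.vecHead, Matrix.vecTail]
    rw [heq, mul_assoc, hequiv _ _ htri, hinv, hb₁spec]
    norm_num [Matrix.cons_val_two, Matrix.vecHead, Matrix.vecTail]
  -- collapse the triple sum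
  have he₁ : ∀ z : ZMod p, z ^ ((p : ℤ) - (a₁ - a₀)) = z ^ (p - d1) := by
    intro z
    have h' : (p : ℤ) - (a₁ - a₀) = ((p - d1 : ℕ) : ℤ) := by omega
    rw [h', _root_.zpow_natCast]
  have step1 : (∑ x : ZMod p, ∑ y : ZMod p, ∑ z : ZMod p,
        ZMod.castHom (dvd_refl p) F
            (x ^ ((p : ℤ) - (a₂ - a₀)) * z ^ ((p : ℤ) - (a₁ - a₀))) *
          f (g₀ * u x y z * w₀))
      = ∑ y : ZMod p, ∑ z : ZMod p,
          ZMod.castHom (dvd_refl p) F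
              ((1 : ZMod p) ^ ((p : ℤ) - (a₂ - a₀)) * z ^ ((p : ℤ) - (a₁ - a₀))) *
            f (g₀ * u 1 y z * w₀) := by
    apply Finset.sum_eq_single_of_mem 1 (Finset.mem_univ 1)
    intro x _ hx
    apply Finset.sum_eq_zero; intro y _
    apply Finset.sum_eq_zero; intro z _
    rw [hvanish x y z (by tauto), mul_zero]
  have step2 : ∀ y : ZMod p, (∑ z : ZMod p,
        ZMod.castHom (dvd_refl p) F
            ((1 : ZMod p) ^ ((p : ℤ) - (a₂ - a₀)) * z ^ ((p : ℤ) - (a₁ - a₀))) *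
          f (g₀ * u 1 y z * w₀))
      = ZMod.castHom (dvd_refl p) F
            ((1 : ZMod p) ^ ((p : ℤ) - (a₂ - a₀)) * y ^ ((p : ℤ) - (a₁ - a₀))) *
          f (g₀ * u 1 y y * w₀) := by
    intro y
    apply Finset.sum_eq_single_of_mem y (Finset.mem_univ y)
    intro z _ hz
    rw [hvanish 1 y z (by tauto), mul_zero]
  rw [step1]
  rw [Finset.sum_congr rfl (fun y _ => step2 y)]
  -- drop y = 1 and rewrite the remaining terms
  have hval : ∀ y : ZMod p, y ∈ (univ : Finset (ZMod p)).erase 1 →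
      ZMod.castHom (dvd_refl p) F
          ((1 : ZMod p) ^ ((p : ℤ) - (a₂ - a₀)) * y ^ ((p : ℤ) - (a₁ - a₀))) *
        f (g₀ * u 1 y y * w₀)
      = ZMod.castHom (dvd_refl p) F
          (y ^ (p - d1) * ((-(y - 1)⁻¹) ^ a₂ * (y - 1) ^ a₁ * (1 : ZMod p) ^ a₀)) * f s₁ := by
    intro y hy
    have hy1 : y ≠ 1 := Finset.ne_of_mem_erase hy
    rw [hgood y hy1, _root_.one_zpow, one_mul, he₁]
    simp only [_root_.map_mul]
    ring
  have hdrop : (∑ y : ZMod p,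
        ZMod.castHom (dvd_refl p) F
            ((1 : ZMod p) ^ ((p : ℤ) - (a₂ - a₀)) * y ^ ((p : ℤ) - (a₁ - a₀))) *
          f (g₀ * u 1 y y * w₀))
      = ∑ y ∈ (univ : Finset (ZMod p)).erase 1,
          ZMod.castHom (dvd_refl p) F
              (y ^ (p - d1) * ((-(y - 1)⁻¹) ^ a₂ * (y - 1) ^ a₁ * (1 : ZMod p) ^ a₀)) * f s₁ := by
    rw [← Finset.sum_erase (univ : Finset (ZMod p))
      (by rw [hvanish 1 1 1 (by tauto), mul_zero])]
    exact Finset.sum_congr rfl hval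
  rw [hdrop, ← Finset.sum_mul, ← map_sum]
  -- compute the ZMod p sum
  have hchi : ∀ y : ZMod p, y ≠ 1 →
      (y : ZMod p) ^ (p - d1) * ((-(y - 1)⁻¹) ^ a₂ * (y - 1) ^ a₁ * (1 : ZMod p) ^ a₀)
      = (-1 : ZMod p) ^ a₂ * (y ^ (p - d1) * (y - 1) ^ (p - 1 - d2)) := by
    intro y hy
    have hα : y - 1 ≠ 0 := sub_ne_zero.mpr hy
    have h1 : (-(y - 1)⁻¹ : ZMod p) ^ a₂ = (-1 : ZMod p) ^ a₂ * ((y - 1) ^ a₂)⁻¹ := by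
      rw [show (-(y - 1)⁻¹ : ZMod p) = (-1) * (y - 1)⁻¹ by ring, _root_.mul_zpow, _root_.inv_zpow]
    have h2 : ((y - 1 : ZMod p) ^ a₂)⁻¹ * (y - 1) ^ a₁ = (y - 1) ^ (p - 1 - d2) := by
      have hz : ((y - 1 : ZMod p) ^ a₂)⁻¹ * (y - 1) ^ a₁ = (y - 1) ^ (a₁ - a₂) := by
        rw [← _root_.zpow_neg, ← _root_.zpow_add₀ hα]
        ring_nf
      rw [hz, show a₁ - a₂ = -(d2 : ℤ) by omega, _root_.zpow_neg, _root_.zpow_natCast]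
      have hone : (y - 1 : ZMod p) ^ (p - 1 - d2) * (y - 1) ^ d2 = 1 := by
        rw [← pow_add, show (p - 1 - d2) + d2 = p - 1 by omega]
        exact ZMod.pow_card_sub_one_eq_one hα
      exact inv_eq_of_mul_eq_one_right (by rw [mul_comm] at hone; exact hone)
    rw [_root_.one_zpow, mul_one, h1]
    rw [mul_assoc, h2]
    ring
  have hsum_zmod : (∑ y ∈ (univ : Finset (ZMod p)).erase 1,
        y ^ (p - d1) * ((-(y - 1)⁻¹) ^ a₂ * (y - 1) ^ a₁ * (1 : ZMod p) ^ a₀))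
      = (-1 : ZMod p) ^ a₂ * (-1) * (Nat.choose (p - d1) d2 : ZMod p) := by
    rw [Finset.sum_congr rfl (fun y hy => hchi y (Finset.ne_of_mem_erase hy)),
      ← Finset.mul_sum]
    have hext : (∑ y ∈ (univ : Finset (ZMod p)).erase 1,
          y ^ (p - d1) * (y - 1) ^ (p - 1 - d2))
        = ∑ y : ZMod p, y ^ (p - d1) * (y - 1) ^ (p - 1 - d2) := by
      apply Finset.sum_erase
      rw [sub_self, zero_pow (by omega), mul_zero]
    have hcf : ((-1:ZMod p)^(p-d1-d2+1) * (Nat.choose (p-1-d2) (d1-1) : ZMod p))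
        = (-1) * (Nat.choose (p-d1) d2 : ZMod p) := by
      rw [pow_succ]
      linear_combination (-1 : ZMod p) * choose_flip_zmod p d1 d2 hd1_3 hd2_3 h12p
    rw [hext, sum_main_zmod p d1 d2 hd1_3 hd2_3 h12p, hcf]
    ring
  rw [hsum_zmod]
  -- identify the target constants
  have htoNat1 : ((p : ℤ) - (a₁ - a₀)).toNat = p - d1 := by omega
  have htoNat2 : (a₂ - a₁).toNat = d2 := by omega
  have hBne : (Nat.choose (p - d1) d2 : F) ≠ 0 := by
    rw [Ne, CharP.cast_eq_zero_iff F p]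
    intro hdvd
    have h := Nat.choose_mul_factorial_mul_factorial (show d2 ≤ p - d1 by omega)
    have hpf : p ∣ (p - d1).factorial := by
      rw [← h]; exact dvd_mul_of_dvd_left (dvd_mul_of_dvd_left hdvd _) _
    have := (Nat.Prime.dvd_factorial hp).mp hpf
    omega
  have hcast : ZMod.castHom (dvd_refl p) F
        ((-1 : ZMod p) ^ a₂ * (-1) * (Nat.choose (p - d1) d2 : ZMod p))
      = (-1 : F) ^ (a₂ - 1) * (Nat.choose (p - d1) d2 : F) := by
    rw [_root_.map_mul, _root_.map_mul, map_zpow₀, map_neg, _root_.map_one, map_natCast]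
    rw [show a₂ - 1 = a₂ + (-1) by ring, _root_.zpow_add₀ (show (-1 : F) ≠ 0 by norm_num),
      _root_.zpow_neg, _root_.zpow_one]
    norm_num
  rw [hcast, htoNat1, htoNat2]
  constructor
  · ring
  · intro hf
    rw [mul_assoc]
    exact mul_ne_zero (zpow_ne_zero _ (by norm_num)) (mul_ne_zero hBne hf)
end
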